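/- arXiv:0911.2571 — 5 statements merged into one kernel-verified Lean document; each statement's English description precedes it below -/
import Mathlib

section
/- Let (X_t)_{t≥0} be a nonnegative càdlàg submartingale of class (Σ) on (Ω, F, P, (F_t)_{t≥0}), and let g := sup{t ≥ 0 : X_t = 0}. If Q and Q' are two σ-finite measures on (Ω, F) such that Q[g = ∞] = 0 = Q'[g = ∞] and, for every t ≥ 0 and every bounded F_t-measurable random variable Γ_t, Q[Γ_t 1_{g ≤ t}] = E_P[Γ_t X_t] and Q'[Γ_t 1_{g ≤ t}] = E_P[Γ_t X_t], then Q = Q'. (Uniqueness part of the main theorem.) -/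
open MeasureTheory Filter Set
open scoped NNReal ENNReal Topology

noncomputable section

variable {Ω : Type*}

/-- A function indexed by `ℝ≥0` is càdlàg: right-continuous with left limits. -/
def Cadlag (f : ℝ≥0 → ℝ) : Prop :=
  (∀ t : ℝ≥0, Tendsto f (nhdsWithin t (Set.Ici t)) (nhds (f t))) ∧
  (∀ t : ℝ≥0, ∃ l : ℝ, Tendsto f (nhdsWithin t (Set.Iio t)) (nhds l))

/-- Natural conditions for a filtered probability space. -/
def NaturalConditions {m0 : MeasurableSpace Ω} (ℱ : Filtration ℝ≥0 m0)
    (P : Measure Ω) : Prop :=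
  (∀ t : ℝ≥0, (ℱ t : MeasurableSpace Ω) = ⨅ s ∈ Set.Ioi t, (ℱ s : MeasurableSpace Ω)) ∧
  (∀ t : ℝ≥0, ∀ A : Set Ω, MeasurableSet[ℱ t] A → P A = 0 →
    ∀ B ⊆ A, MeasurableSet[ℱ 0] B)

/-- `X = N + A` is a nonnegative càdlàg submartingale of class `(Σ)`. -/
structure ClassSigma {m0 : MeasurableSpace Ω} (ℱ : Filtration ℝ≥0 m0)
    (P : Measure Ω) (X N A : ℝ≥0 → Ω → ℝ) : Prop where
  nonneg : ∀ t ω, 0 ≤ X t ω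
  cadlagX : ∀ ω, Cadlag fun t => X t ω
  subm : Submartingale X ℱ P
  decomp : ∀ t ω, X t ω = N t ω + A t ω
  martN : Martingale N ℱ P
  cadlagN : ∀ ω, Cadlag fun t => N t ω
  contA : ∀ ω, Continuous fun t => A t ω
  adaptedA : Adapted ℱ A
  monoA : ∀ ω, Monotone fun t => A t ω
  zeroA : ∀ ω, A 0 ω = 0
  carriedA : ∀ᵐ ω ∂P, ∀ s t : ℝ≥0, s ≤ t →
    (∀ u ∈ Set.Icc s t, X u ω ≠ 0) → A t ω = A s ω

/-- `g`, the last zero of `X` (with value `∞` if the zeros are unbounded, `0` if none). -/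
def lastZero (X : ℝ≥0 → Ω → ℝ) (ω : Ω) : ℝ≥0∞ :=
  sSup ((fun t : ℝ≥0 => (t : ℝ≥0∞)) '' {t | X t ω = 0})

/-- `Q` is the σ-finite measure associated with `X`. -/
def AssociatedMeasure {m0 : MeasurableSpace Ω} (ℱ : Filtration ℝ≥0 m0)
    (P Q : Measure Ω) (X : ℝ≥0 → Ω → ℝ) : Prop :=
  SigmaFinite Q ∧ Q {ω | lastZero X ω = ∞} = 0 ∧
  ∀ t : ℝ≥0, ∀ Λ : Set Ω, MeasurableSet[ℱ t] Λ →
    Q (Λ ∩ {ω | lastZero X ω ≤ (t : ℝ≥0∞)}) = ENNReal.ofReal (∫ ω in Λ, X t ω ∂P)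

/-- `M` is a density martingale of the functional `F` (w.r.t. `P` and `Q`). -/
def DensityMartingale {m0 : MeasurableSpace Ω} (ℱ : Filtration ℝ≥0 m0)
    (P Q : Measure Ω) (F : Ω → ℝ) (M : ℝ≥0 → Ω → ℝ) : Prop :=
  Martingale M ℱ P ∧ (∀ t : ℝ≥0, ∀ᵐ ω ∂P, 0 ≤ M t ω) ∧ (∀ ω, Cadlag fun t => M t ω) ∧
  ∀ t : ℝ≥0, ∀ Λ : Set Ω, MeasurableSet[ℱ t] Λ →
    ∫ ω in Λ, F ω ∂Q = ∫ ω in Λ, M t ω ∂P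

/-- The exponential identity : `∫_Λ e^{-A_∞} dQ = E_P[1_Λ e^{-A_t}(1+X_t)]`. -/
def ExpIdentity {m0 : MeasurableSpace Ω} (ℱ : Filtration ℝ≥0 m0)
    (P Q : Measure Ω) (X A : ℝ≥0 → Ω → ℝ) : Prop :=
  ∀ t : ℝ≥0, ∀ Λ : Set Ω, MeasurableSet[ℱ t] Λ →
    ∫ ω in Λ, (⨅ s : ℝ≥0, Real.exp (-(A s ω))) ∂Q =
    ∫ ω in Λ, Real.exp (-(A t ω)) * (1 + X t ω) ∂P

/-- last passage time of `X` in `(-∞, a]`. -/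
def lastBelow (a : ℝ) (X : ℝ≥0 → Ω → ℝ) (ω : Ω) : ℝ≥0∞ :=
  sSup ((fun t : ℝ≥0 => (t : ℝ≥0∞)) '' {t | X t ω ≤ a})

namespace UniquenessAux

/-- Countable approximation set: rational-valued points of `(s,t)` together with `t`. -/
def Dset (s t : ℝ≥0) : Set ℝ≥0 :=
  {u | u ∈ Set.Ioo s t ∧ ∃ q : ℚ, (u : ℝ) = (q : ℝ)} ∪ {t}

lemma Dset_countable (s t : ℝ≥0) : (Dset s t).Countable := by
  apply Set.Countable.union _ (Set.countable_singleton t)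
  have hsub : {u : ℝ≥0 | u ∈ Set.Ioo s t ∧ ∃ q : ℚ, (u : ℝ) = (q : ℝ)} ⊆
      Set.range (fun q : ℚ => Real.toNNReal (q : ℝ)) := by
    rintro u ⟨-, q, hq⟩
    exact ⟨q, by simp only [← hq, Real.toNNReal_coe]⟩
  exact (Set.countable_range _).mono hsub

lemma Dset_nonempty (s t : ℝ≥0) : (Dset s t).Nonempty :=
  ⟨t, Or.inr rfl⟩

/-- An enumeration of `Dset s t`. -/
noncomputable def fseq (s t : ℝ≥0) : ℕ → ℝ≥0 :=
  ((Dset_countable s t).exists_eq_range (Dset_nonempty s t)).choose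

lemma fseq_spec (s t : ℝ≥0) : Dset s t = Set.range (fseq s t) :=
  ((Dset_countable s t).exists_eq_range (Dset_nonempty s t)).choose_spec

lemma fseq_mem (s t : ℝ≥0) (n : ℕ) : fseq s t n ∈ Dset s t := by
  rw [fseq_spec s t]; exact Set.mem_range_self n

lemma fseq_le {s t : ℝ≥0} (hst : s ≤ t) (n : ℕ) :
    s ≤ fseq s t n ∧ fseq s t n ≤ t := by
  rcases fseq_mem s t n with ⟨⟨h1, h2⟩, -⟩ | h
  · exact ⟨h1.le, h2.le⟩
  · rw [Set.mem_singleton_iff] at h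
    rw [h]; exact ⟨hst, le_rfl⟩

lemma exists_fseq_mem {s t u b : ℝ≥0} (hsu : s < u) (hub : u < b) (hbt : b ≤ t) :
    ∃ n, fseq s t n ∈ Set.Ioo u b := by
  obtain ⟨q, hq1, hq2⟩ := exists_rat_btwn (show (u : ℝ) < (b : ℝ) from hub)
  have hq0 : (0 : ℝ) ≤ (q : ℝ) := le_trans u.coe_nonneg hq1.le
  have hvq : ((Real.toNNReal (q : ℝ)) : ℝ) = (q : ℝ) := Real.coe_toNNReal _ hq0
  set v := Real.toNNReal (q : ℝ) with hv
  have huv : u < v := by rw [← NNReal.coe_lt_coe, hvq]; exact hq1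
  have hvb : v < b := by rw [← NNReal.coe_lt_coe, hvq]; exact hq2
  have hmem : v ∈ Dset s t :=
    Or.inl ⟨⟨lt_trans hsu huv, lt_of_lt_of_le hvb hbt⟩, ⟨q, hvq⟩⟩
  rw [fseq_spec s t] at hmem
  obtain ⟨n, hn⟩ := hmem
  exact ⟨n, by rw [← hn] at huv hvb; exact ⟨huv, hvb⟩⟩

/-- The (measurable) event that `X` stays uniformly away from `0` on the
approximation set. -/
def Rset (X : ℝ≥0 → Ω → ℝ) (s t : ℝ≥0) : Set Ω :=
  {ω | ∃ m : ℕ, ∀ n : ℕ, ((m : ℝ) + 1)⁻¹ ≤ X (fseq s t n) ω}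

/-- The event `{g ≤ t}`. -/
def Bz (X : ℝ≥0 → Ω → ℝ) (t : ℝ≥0) : Set Ω := {ω | lastZero X ω ≤ (t : ℝ≥0∞)}

lemma Bz_mono (X : ℝ≥0 → Ω → ℝ) {s t : ℝ≥0} (hst : s ≤ t) : Bz X s ⊆ Bz X t :=
  fun _ h => le_trans h (ENNReal.coe_le_coe.2 hst)

lemma le_lastZero {X : ℝ≥0 → Ω → ℝ} {ω : Ω} {u : ℝ≥0} (h : X u ω = 0) :
    (u : ℝ≥0∞) ≤ lastZero X ω := by
  have : (u : ℝ≥0∞) ∈ (fun t : ℝ≥0 => (t : ℝ≥0∞)) '' {t | X t ω = 0} := ⟨u, h, rfl⟩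
  exact le_sSup this

lemma Rset_inter_subset {X : ℝ≥0 → Ω → ℝ}
    (hrc : ∀ ω t, Tendsto (fun u => X u ω) (nhdsWithin t (Set.Ici t)) (nhds (X t ω)))
    {s t : ℝ≥0} (hst : s ≤ t) :
    Rset X s t ∩ Bz X t ⊆ Bz X s := by
  rintro ω ⟨⟨m, hm⟩, hgt⟩
  have hpos : (0 : ℝ) < ((m : ℝ) + 1)⁻¹ := by positivity
  show sSup ((fun t : ℝ≥0 => (t : ℝ≥0∞)) '' {t | X t ω = 0}) ≤ (s : ℝ≥0∞)
  refine sSup_le ?_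
  rintro e ⟨u, hu, rfl⟩
  simp only [Set.mem_setOf_eq] at hu
  rw [ENNReal.coe_le_coe]
  by_contra hcon
  push_neg at hcon
  have hut : u ≤ t := ENNReal.coe_le_coe.1 (le_trans (le_lastZero hu) hgt)
  rcases eq_or_lt_of_le hut with rfl | hlt
  · obtain ⟨n, hn⟩ : ∃ n, fseq s u n = u := by
      have hmem : u ∈ Dset s u := Or.inr rfl
      rw [fseq_spec s u] at hmem
      obtain ⟨n, hn⟩ := hmem
      exact ⟨n, hn⟩
    have h2 := hm n
    rw [hn, hu] at h2
    linarith
  · have hev : {v | X v ω < ((m : ℝ) + 1)⁻¹} ∈ nhdsWithin u (Set.Ici u) := by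
      have h3 := hrc ω u
      rw [hu] at h3
      exact h3.eventually_lt_const hpos
    rw [mem_nhdsGE_iff_exists_Ico_subset' hlt] at hev
    obtain ⟨b, hb, hsub⟩ := hev
    obtain ⟨n, hn⟩ := exists_fseq_mem hcon (lt_min hb hlt) (min_le_right b t)
    have h1 : X (fseq s t n) ω < ((m : ℝ) + 1)⁻¹ :=
      hsub ⟨hn.1.le, lt_of_lt_of_le hn.2 (min_le_left b t)⟩
    have h2 := hm n
    linarith

variable {m0 : MeasurableSpace Ω}

lemma Rset_measurableSet (ℱ : Filtration ℝ≥0 m0) {X : ℝ≥0 → Ω → ℝ}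
    (hAd : Adapted ℱ X) {s t : ℝ≥0} (hst : s ≤ t) :
    MeasurableSet[ℱ t] (Rset X s t) := by
  have hXm : ∀ n : ℕ, Measurable[ℱ t] (X (fseq s t n)) := fun n =>
    (hAd (fseq s t n)).mono (ℱ.mono (fseq_le hst n).2) le_rfl
  have hset : Rset X s t =
      ⋃ m : ℕ, ⋂ n : ℕ, (X (fseq s t n)) ⁻¹' (Set.Ici ((m : ℝ) + 1)⁻¹) := by
    ext ω
    simp only [Rset, Set.mem_setOf_eq, Set.mem_iUnion, Set.mem_iInter, Set.mem_preimage,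
      Set.mem_Ici]
  rw [hset]
  exact MeasurableSet.iUnion fun m => MeasurableSet.iInter fun n => hXm n measurableSet_Ici

lemma Q_compl_Rset (ℱ : Filtration ℝ≥0 m0) (P Q : Measure Ω) [IsProbabilityMeasure P]
    {X : ℝ≥0 → Ω → ℝ}
    (hAd : Adapted ℱ X) (hInt : ∀ v : ℝ≥0, Integrable (X v) P)
    (hQf : ∀ v : ℝ≥0, ∀ Λ : Set Ω, MeasurableSet[ℱ v] Λ →
      Q (Λ ∩ Bz X v) = ENNReal.ofReal (∫ ω in Λ, X v ω ∂P))
    {s t : ℝ≥0} (hst : s ≤ t) :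
    Q ((Rset X s t)ᶜ ∩ Bz X s) = 0 := by
  classical
  have key : ∀ m : ℕ, Q ((Rset X s t)ᶜ ∩ Bz X s) ≤ ENNReal.ofReal ((m : ℝ) + 1)⁻¹ := by
    intro m
    set ε : ℝ := ((m : ℝ) + 1)⁻¹ with hε
    have hεpos : 0 < ε := by positivity
    set S : ℕ → Set Ω := fun n => {ω | X (fseq s t n) ω < ε} ∩ Bz X s with hS
    have hsub : (Rset X s t)ᶜ ∩ Bz X s ⊆ ⋃ n, S n := by
      rintro ω ⟨hR, hB⟩
      simp only [Rset, Set.mem_compl_iff, Set.mem_setOf_eq, not_exists, not_forall,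
        not_le] at hR
      obtain ⟨n, hn⟩ := hR m
      exact Set.mem_iUnion.2 ⟨n, hn, hB⟩
    refine le_trans (measure_mono hsub) ?_
    rw [measure_iUnion_eq_iSup_accumulate]
    refine iSup_le fun k => ?_
    set J : Finset ℕ := Finset.range (k + 1) with hJ
    set keyf : ℕ → ℝ≥0 ×ₗ ℕ := fun n => toLex (fseq s t n, n) with hkeyf
    set Γ : ℕ → Set Ω := fun n => {ω | X (fseq s t n) ω < ε} ∩
      ⋂ j ∈ J.filter (fun j => keyf j < keyf n), {ω | ε ≤ X (fseq s t j) ω} with hΓ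
    have hkeylt : ∀ {j n : ℕ}, keyf j < keyf n → fseq s t j ≤ fseq s t n := by
      intro j n h
      rcases Prod.Lex.lt_iff.1 h with h' | ⟨h', -⟩
      · exact le_of_lt h'
      · exact le_of_eq h'
    have hΓmeas : ∀ n : ℕ, MeasurableSet[ℱ (fseq s t n)] (Γ n) := by
      intro n
      refine MeasurableSet.inter ?_ ?_
      · exact (hAd (fseq s t n)) measurableSet_Iio
      · refine Finset.measurableSet_biInter _ fun j hj => ?_
        have hjle : fseq s t j ≤ fseq s t n := hkeylt (Finset.mem_filter.1 hj).2
        exact ((hAd (fseq s t j)).mono (ℱ.mono hjle) le_rfl) measurableSet_Ici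
    have hΓmeas0 : ∀ n : ℕ, MeasurableSet (Γ n) := fun n => ℱ.le _ _ (hΓmeas n)
    have hcover : Set.accumulate S k ⊆ ⋃ n ∈ J, (Γ n ∩ Bz X (fseq s t n)) := by
      intro ω hω
      obtain ⟨i, hik, hωi⟩ := Set.mem_accumulate.1 hω
      have hωB : ω ∈ Bz X s := hωi.2
      set T : Finset ℕ := J.filter (fun n => X (fseq s t n) ω < ε) with hT
      have hTne : T.Nonempty :=
        ⟨i, Finset.mem_filter.2 ⟨Finset.mem_range.2 (Nat.lt_succ_of_le hik), hωi.1⟩⟩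
      obtain ⟨n₀, hn₀T, hmin⟩ := T.exists_min_image keyf hTne
      refine Set.mem_biUnion (Finset.mem_filter.1 hn₀T).1 ?_
      refine ⟨⟨(Finset.mem_filter.1 hn₀T).2, ?_⟩, Bz_mono X (fseq_le hst n₀).1 hωB⟩
      refine Set.mem_iInter₂.2 fun j hj => ?_
      by_contra hlt
      simp only [Set.mem_setOf_eq, not_le] at hlt
      have hjT : j ∈ T := Finset.mem_filter.2 ⟨(Finset.mem_filter.1 hj).1, hlt⟩
      exact absurd (Finset.mem_filter.1 hj).2 (not_lt.2 (hmin j hjT))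
    have hdisj : (↑J : Set ℕ).PairwiseDisjoint Γ := by
      intro a ha b hb hab
      have hk : keyf a ≠ keyf b := by
        intro h
        have := toLex_inj.1 h
        exact hab (congrArg Prod.snd this)
      have haux : ∀ {a b : ℕ}, a ∈ (↑J : Set ℕ) → keyf a < keyf b →
          Disjoint (Γ a) (Γ b) := by
        intro a b ha' hab'
        refine Set.disjoint_left.2 fun ω hωa hωb => ?_
        have h1 : X (fseq s t a) ω < ε := hωa.1
        have h2 : ε ≤ X (fseq s t a) ω :=
          Set.mem_iInter₂.1 hωb.2 a (Finset.mem_filter.2 ⟨Finset.mem_coe.1 ha', hab'⟩)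
        linarith
      rcases lt_or_gt_of_ne hk with h | h
      · exact haux ha h
      · exact (haux hb h).symm
    calc Q (Set.accumulate S k)
        ≤ Q (⋃ n ∈ J, (Γ n ∩ Bz X (fseq s t n))) := measure_mono hcover
      _ ≤ ∑ n ∈ J, Q (Γ n ∩ Bz X (fseq s t n)) := measure_biUnion_finset_le _ _
      _ = ∑ n ∈ J, ENNReal.ofReal (∫ ω in Γ n, X (fseq s t n) ω ∂P) :=
          Finset.sum_congr rfl fun n _ => hQf (fseq s t n) (Γ n) (hΓmeas n)
      _ ≤ ∑ n ∈ J, ENNReal.ofReal ε * P (Γ n) := by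
          refine Finset.sum_le_sum fun n _ => ?_
          have hle : ∫ ω in Γ n, X (fseq s t n) ω ∂P ≤ ε * (P (Γ n)).toReal := by
            have hmono := setIntegral_mono_on (hInt (fseq s t n)).integrableOn
              (integrableOn_const (measure_ne_top P (Γ n))) (hΓmeas0 n)
              (fun x hx => le_of_lt hx.1)
            rw [setIntegral_const] at hmono
            simpa [smul_eq_mul, mul_comm, measureReal_def] using hmono
          calc ENNReal.ofReal (∫ ω in Γ n, X (fseq s t n) ω ∂P)
              ≤ ENNReal.ofReal (ε * (P (Γ n)).toReal) := ENNReal.ofReal_le_ofReal hle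
            _ = ENNReal.ofReal ε * ENNReal.ofReal ((P (Γ n)).toReal) :=
                ENNReal.ofReal_mul hεpos.le
            _ = ENNReal.ofReal ε * P (Γ n) := by
                rw [ENNReal.ofReal_toReal (measure_ne_top P _)]
      _ = ENNReal.ofReal ε * P (⋃ n ∈ J, Γ n) := by
          rw [measure_biUnion_finset hdisj (fun n _ => hΓmeas0 n), Finset.mul_sum]
      _ ≤ ENNReal.ofReal ε * 1 := by gcongr; exact prob_le_one
      _ = ENNReal.ofReal ε := mul_one _
  have htend : Tendsto (fun m : ℕ => ENNReal.ofReal ((m : ℝ) + 1)⁻¹) atTop (𝓝 0) := by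
    have h1 : Tendsto (fun m : ℕ => ((m : ℝ) + 1)⁻¹) atTop (𝓝 0) := by
      simpa only [one_div] using tendsto_one_div_add_atTop_nhds_zero_nat (𝕜 := ℝ)
    have h2 := (ENNReal.continuous_ofReal.tendsto 0).comp h1
    rw [ENNReal.ofReal_zero] at h2
    exact h2
  exact le_antisymm (ge_of_tendsto' htend key) (by simp)

lemma Q_inter_Bz (ℱ : Filtration ℝ≥0 m0) (P Q : Measure Ω) [IsProbabilityMeasure P]
    {X : ℝ≥0 → Ω → ℝ}
    (hrc : ∀ ω t, Tendsto (fun u => X u ω) (nhdsWithin t (Set.Ici t)) (nhds (X t ω)))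
    (hAd : Adapted ℱ X) (hInt : ∀ v : ℝ≥0, Integrable (X v) P)
    (hQf : ∀ v : ℝ≥0, ∀ Λ : Set Ω, MeasurableSet[ℱ v] Λ →
      Q (Λ ∩ Bz X v) = ENNReal.ofReal (∫ ω in Λ, X v ω ∂P))
    {s t : ℝ≥0} (hst : s ≤ t) {Λ : Set Ω} (hΛ : MeasurableSet[ℱ t] Λ) :
    Q (Λ ∩ Bz X s) = ENNReal.ofReal (∫ ω in Λ ∩ Rset X s t, X t ω ∂P) := by
  have hR := Rset_measurableSet ℱ hAd hst (X := X)
  have h1 : Q ((Λ ∩ Rset X s t) ∩ Bz X t) =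
      ENNReal.ofReal (∫ ω in Λ ∩ Rset X s t, X t ω ∂P) := hQf t _ (hΛ.inter hR)
  rw [← h1]
  apply le_antisymm
  · have hsplit : Λ ∩ Bz X s ⊆ ((Λ ∩ Rset X s t) ∩ Bz X t) ∪ ((Rset X s t)ᶜ ∩ Bz X s) := by
      rintro ω ⟨hΛω, hB⟩
      by_cases hr : ω ∈ Rset X s t
      · exact Or.inl ⟨⟨hΛω, hr⟩, Bz_mono X hst hB⟩
      · exact Or.inr ⟨hr, hB⟩
    refine le_trans (measure_mono hsplit) ?_
    refine le_trans (measure_union_le _ _) ?_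
    rw [Q_compl_Rset ℱ P Q hAd hInt hQf hst, add_zero]
  · refine measure_mono ?_
    rintro ω ⟨⟨hΛω, hr⟩, hB⟩
    exact ⟨hΛω, Rset_inter_subset hrc hst ⟨hr, hB⟩⟩

end UniquenessAux

open UniquenessAux in
/-- Uniqueness of the σ-finite measure associated with a submartingale of class `(Σ)`. -/
theorem uniqueness_of_associated_measure
    {m0 : MeasurableSpace Ω} (ℱ : Filtration ℝ≥0 m0) (P : Measure Ω)
    [IsProbabilityMeasure P]
    (hnat : NaturalConditions ℱ P)
    (hgen : (⨆ t : ℝ≥0, (ℱ t : MeasurableSpace Ω)) = m0)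
    (X N A : ℝ≥0 → Ω → ℝ) (hX : ClassSigma ℱ P X N A)
    (Q Q' : Measure Ω)
    (hQ : AssociatedMeasure ℱ P Q X) (hQ' : AssociatedMeasure ℱ P Q' X) :
    Q = Q' := by
  classical
  obtain ⟨-, hQnull, hQf⟩ := hQ
  obtain ⟨-, hQ'null, hQ'f⟩ := hQ'
  have hrc : ∀ ω t, Tendsto (fun u => X u ω) (nhdsWithin t (Set.Ici t)) (nhds (X t ω)) :=
    fun ω t => (hX.cadlagX ω).1 t
  have hAd : Adapted ℱ X := hX.subm.stronglyAdapted.adapted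
  have hInt : ∀ v : ℝ≥0, Integrable (X v) P := fun v => hX.subm.integrable v
  have hQfB : ∀ v : ℝ≥0, ∀ Λ : Set Ω, MeasurableSet[ℱ v] Λ →
      Q (Λ ∩ Bz X v) = ENNReal.ofReal (∫ ω in Λ, X v ω ∂P) := hQf
  have hQ'fB : ∀ v : ℝ≥0, ∀ Λ : Set Ω, MeasurableSet[ℱ v] Λ →
      Q' (Λ ∩ Bz X v) = ENNReal.ofReal (∫ ω in Λ, X v ω ∂P) := hQ'f
  -- the two measures agree on every slice `S ∩ {g ≤ s}` for measurable `S`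
  have hkey : ∀ s : ℝ≥0, ∀ S : Set Ω, MeasurableSet S →
      Q (S ∩ Bz X s) = Q' (S ∩ Bz X s) := by
    intro s
    have hgen' : m0 = MeasurableSpace.generateFrom
        {S : Set Ω | ∃ u : ℝ≥0, MeasurableSet[ℱ u] S} :=
      hgen.symm.trans (MeasurableSpace.measurableSpace_iSup_eq _)
    have hpi : IsPiSystem {S : Set Ω | ∃ u : ℝ≥0, MeasurableSet[ℱ u] S} := by
      rintro S1 ⟨u, hu⟩ S2 ⟨u', hu'⟩ -
      exact ⟨max u u', (ℱ.mono (le_max_left u u') _ hu).inter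
        (ℱ.mono (le_max_right u u') _ hu')⟩
    have htot : Q (Bz X s) = Q' (Bz X s) := by
      have h1 := Q_inter_Bz ℱ P Q hrc hAd hInt hQfB le_rfl
        (MeasurableSet.univ : MeasurableSet[ℱ s] Set.univ)
      have h2 := Q_inter_Bz ℱ P Q' hrc hAd hInt hQ'fB le_rfl
        (MeasurableSet.univ : MeasurableSet[ℱ s] Set.univ)
      rw [Set.univ_inter] at h1 h2
      rw [h1, h2]
    have htotne : Q (Bz X s) ≠ ∞ := by
      have h1 := Q_inter_Bz ℱ P Q hrc hAd hInt hQfB le_rfl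
        (MeasurableSet.univ : MeasurableSet[ℱ s] Set.univ)
      rw [Set.univ_inter] at h1
      rw [h1]
      exact ENNReal.ofReal_ne_top
    refine MeasurableSpace.induction_on_inter hgen' hpi ?_ ?_ ?_ ?_
    · simp
    · rintro S ⟨u, hu⟩
      have h1 := Q_inter_Bz ℱ P Q hrc hAd hInt hQfB
        (le_max_right u s) (ℱ.mono (le_max_left u s) _ hu)
      have h2 := Q_inter_Bz ℱ P Q' hrc hAd hInt hQ'fB
        (le_max_right u s) (ℱ.mono (le_max_left u s) _ hu)
      rw [h1, h2]
    · intro S hSm hCS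
      have e1 : Q (Bz X s ∩ S) + Q (Bz X s \ S) = Q (Bz X s) :=
        measure_inter_add_diff _ hSm
      have e2 : Q' (Bz X s ∩ S) + Q' (Bz X s \ S) = Q' (Bz X s) :=
        measure_inter_add_diff _ hSm
      rw [Set.inter_comm] at e1 e2
      rw [hCS] at e1
      have e3 : Q' (S ∩ Bz X s) + Q (Bz X s \ S) = Q' (S ∩ Bz X s) + Q' (Bz X s \ S) := by
        rw [e1, e2, htot]
      have hne : Q' (S ∩ Bz X s) ≠ ∞ := by
        refine ne_top_of_le_ne_top ?_ (measure_mono Set.inter_subset_right)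
        rw [← htot]; exact htotne
      have e4 : Q (Bz X s \ S) = Q' (Bz X s \ S) := (ENNReal.add_right_inj hne).1 e3
      have hset : Sᶜ ∩ Bz X s = Bz X s \ S := by
        rw [Set.diff_eq, Set.inter_comm]
      rw [hset]
      exact e4
    · intro f hdisj hmeas hC
      have hrw : ∀ μ : Measure Ω, μ ((⋃ i, f i) ∩ Bz X s) = ∑' i, μ (f i ∩ Bz X s) := by
        intro μ
        calc μ ((⋃ i, f i) ∩ Bz X s) = μ.restrict (Bz X s) (⋃ i, f i) :=
              (Measure.restrict_apply (MeasurableSet.iUnion hmeas)).symm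
          _ = ∑' i, μ.restrict (Bz X s) (f i) := measure_iUnion hdisj hmeas
          _ = ∑' i, μ (f i ∩ Bz X s) := tsum_congr fun i => Measure.restrict_apply (hmeas i)
      rw [hrw Q, hrw Q']
      exact tsum_congr fun i => hC i
  -- conclude
  ext S hS
  have hrwμ : ∀ μ : Measure Ω, μ {ω | lastZero X ω = ∞} = 0 →
      μ S = ⨆ n : ℕ, μ (S ∩ Bz X (n : ℝ≥0)) := by
    intro μ hnull
    set E : Set Ω := {ω | lastZero X ω = ∞} with hE
    have h1 : μ S = μ (S \ E) := by
      apply le_antisymm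
      · calc μ S = μ ((S \ E) ∪ (S ∩ E)) := by rw [Set.diff_union_inter]
          _ ≤ μ (S \ E) + μ (S ∩ E) := measure_union_le _ _
          _ ≤ μ (S \ E) + 0 :=
              add_le_add_right (le_trans (measure_mono Set.inter_subset_right) hnull.le) _
          _ = μ (S \ E) := add_zero _
      · exact measure_mono Set.diff_subset
    have h2 : S \ E = ⋃ n : ℕ, S ∩ Bz X (n : ℝ≥0) := by
      ext ω
      constructor
      · rintro ⟨hω, hne⟩
        have hne' : lastZero X ω ≠ ∞ := hne
        obtain ⟨n, hn⟩ := ENNReal.exists_nat_gt hne'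
        refine Set.mem_iUnion.2 ⟨n, hω, ?_⟩
        show lastZero X ω ≤ (((n : ℕ) : ℝ≥0) : ℝ≥0∞)
        rw [ENNReal.coe_natCast]
        exact hn.le
      · intro hω
        obtain ⟨n, hωS, hωB⟩ := Set.mem_iUnion.1 hω
        refine ⟨hωS, ?_⟩
        show ¬ lastZero X ω = ∞
        exact ne_top_of_le_ne_top ENNReal.coe_ne_top hωB
    rw [h1, h2]
    refine Monotone.measure_iUnion fun a b hab => ?_
    exact Set.inter_subset_inter (subset_refl S) (Bz_mono X (by exact_mod_cast hab))
  rw [hrwμ Q hQnull, hrwμ Q' hQ'null]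
  exact iSup_congr fun n => hkey _ S hS
end
end

section
/- Let X be of class (Σ), let Q be the measure associated with X, let F be a nonnegative Q-integrable functional and let (M_t(F))_{t≥0} be a density martingale of F. Then P-almost surely, on the event {A_∞ = ∞}, M_t(F) → 0 as t → ∞. -/
open MeasureTheory Filter Set
open scoped NNReal ENNReal Topology

noncomputable section

variable {Ω : Type*}

lemma doob_aux {m0 : MeasurableSpace Ω} (ℱ : Filtration ℝ≥0 m0) (P : Measure Ω)
    [IsFiniteMeasure P] {M : ℝ≥0 → Ω → ℝ} (hM : Martingale M ℱ P) {ε : ℝ}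
    (s : Finset ℝ≥0) :
    ∀ T : ℝ≥0, (∀ t ∈ s, t ≤ T) → ∀ Λ : Set Ω, (∀ t ∈ s, MeasurableSet[ℱ t] Λ) →
      ε * (P (Λ ∩ ⋃ t ∈ s, {ω | ε < M t ω})).toReal ≤
        ∫ ω in Λ ∩ ⋃ t ∈ s, {ω | ε < M t ω}, M T ω ∂P := by
  classical
  induction s using Finset.induction_on_min with
  | empty => intro T _ Λ _; simp
  | insert a s ha IH =>
    intro T hT Λ hΛ
    have haT : a ≤ T := hT a (Finset.mem_insert_self a s)
    have hMa : MeasurableSet[ℱ a] {ω | ε < M a ω} :=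
      measurableSet_lt measurable_const (hM.stronglyAdapted a).measurable
    have hΛa : MeasurableSet[ℱ a] Λ := hΛ a (Finset.mem_insert_self a s)
    have hP1 : MeasurableSet[ℱ a] (Λ ∩ {ω | ε < M a ω}) := hΛa.inter hMa
    have hP1m0 : MeasurableSet (Λ ∩ {ω | ε < M a ω}) := ℱ.le a _ hP1
    have hUm0 : MeasurableSet (⋃ t ∈ s, {ω | ε < M t ω}) :=
      s.measurableSet_biUnion fun t _ =>
        ℱ.le t _ (measurableSet_lt measurable_const (hM.stronglyAdapted t).measurable)
    have hΛ'm0 : MeasurableSet ((Λ ∩ {ω | ε < M a ω}ᶜ) ∩ ⋃ t ∈ s, {ω | ε < M t ω}) :=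
      ((ℱ.le a _ hΛa).inter (ℱ.le a _ hMa).compl).inter hUm0
    have hsplit : Λ ∩ ⋃ t ∈ insert a s, {ω | ε < M t ω} =
        (Λ ∩ {ω | ε < M a ω}) ∪ ((Λ ∩ {ω | ε < M a ω}ᶜ) ∩ ⋃ t ∈ s, {ω | ε < M t ω}) := by
      rw [Finset.set_biUnion_insert]
      ext ω
      by_cases h : ε < M a ω <;> simp [h] <;> tauto

    have hdisj : Disjoint (Λ ∩ {ω | ε < M a ω})
        ((Λ ∩ {ω | ε < M a ω}ᶜ) ∩ ⋃ t ∈ s, {ω | ε < M t ω}) :=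
      disjoint_compl_right.mono inter_subset_right
        (inter_subset_left.trans inter_subset_right)
    have hint : IntegrableOn (M T) (Λ ∩ {ω | ε < M a ω}) P := (hM.integrable T).integrableOn
    have hint' : IntegrableOn (M T) ((Λ ∩ {ω | ε < M a ω}ᶜ) ∩ ⋃ t ∈ s, {ω | ε < M t ω}) P :=
      (hM.integrable T).integrableOn
    have h1 : ε * (P (Λ ∩ {ω | ε < M a ω})).toReal ≤
        ∫ ω in Λ ∩ {ω | ε < M a ω}, M T ω ∂P := by
      have hge : ε * (P (Λ ∩ {ω | ε < M a ω})).toReal ≤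
          ∫ ω in Λ ∩ {ω | ε < M a ω}, M a ω ∂P :=
        by
          have h := setIntegral_ge_of_const_le hP1m0 (measure_ne_top P _)
            (fun x hx => le_of_lt hx.2) (hM.integrable a).integrableOn
          rw [smul_eq_mul, mul_comm] at h; exact h
      rwa [hM.setIntegral_eq haT hP1] at hge
    have h2 := IH T (fun t ht => hT t (Finset.mem_insert_of_mem ht))
      ((Λ ∩ {ω | ε < M a ω}ᶜ))
      (fun t ht => (hΛ t (Finset.mem_insert_of_mem ht)).inter
        ((ℱ.mono (ha t ht).le) _ hMa.compl))
    rw [hsplit, measure_union hdisj hΛ'm0, setIntegral_union hdisj hΛ'm0 hint hint',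
      ENNReal.toReal_add (measure_ne_top P _) (measure_ne_top P _), mul_add]
    exact add_le_add h1 h2

lemma qbound_aux {m0 : MeasurableSpace Ω} (ℱ : Filtration ℝ≥0 m0) (P Q : Measure Ω)
    [IsProbabilityMeasure P] {X : ℝ≥0 → Ω → ℝ}
    (hadp : Adapted ℱ X) (hint : ∀ t, Integrable (X t) P)
    (hform : ∀ t : ℝ≥0, ∀ Λ : Set Ω, MeasurableSet[ℱ t] Λ →
      Q (Λ ∩ {ω | lastZero X ω ≤ (t : ℝ≥0∞)}) = ENNReal.ofReal (∫ ω in Λ, X t ω ∂P))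
    {δ : ℝ} (hδ : 0 ≤ δ) (n : ℝ≥0) (s : Finset ℝ≥0) :
    (∀ t ∈ s, n ≤ t) → ∀ Λ : Set Ω, (∀ t ∈ s, MeasurableSet[ℱ t] Λ) →
      Q (Λ ∩ (⋃ t ∈ s, {ω | X t ω < δ}) ∩ {ω | lastZero X ω ≤ (n : ℝ≥0∞)}) ≤
        ENNReal.ofReal δ * P Λ := by
  classical
  induction s using Finset.induction_on_min with
  | empty => intro _ Λ _; simp
  | insert a s ha IH =>
    intro hn Λ hΛ
    have hna : n ≤ a := hn a (Finset.mem_insert_self a s)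
    have hVa : MeasurableSet[ℱ a] {ω | X a ω < δ} :=
      measurableSet_lt (hadp a) measurable_const
    have hΛa : MeasurableSet[ℱ a] Λ := hΛ a (Finset.mem_insert_self a s)
    have hsubset : Λ ∩ (⋃ t ∈ insert a s, {ω | X t ω < δ}) ∩ {ω | lastZero X ω ≤ (n : ℝ≥0∞)} ⊆
        ((Λ ∩ {ω | X a ω < δ}) ∩ {ω | lastZero X ω ≤ (a : ℝ≥0∞)}) ∪
        ((Λ ∩ {ω | X a ω < δ}ᶜ) ∩ (⋃ t ∈ s, {ω | X t ω < δ}) ∩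
          {ω | lastZero X ω ≤ (n : ℝ≥0∞)}) := by
      rw [Finset.set_biUnion_insert]
      intro ω hω
      rcases hω with ⟨⟨hΛω, hU⟩, hg⟩
      by_cases h : X a ω < δ
      · refine Or.inl ⟨⟨hΛω, h⟩, ?_⟩
        exact le_trans hg (ENNReal.coe_le_coe.2 hna)
      · rcases hU with hU | hU
        · exact absurd hU h
        · exact Or.inr ⟨⟨⟨hΛω, h⟩, hU⟩, hg⟩
    have hleft : Q ((Λ ∩ {ω | X a ω < δ}) ∩ {ω | lastZero X ω ≤ (a : ℝ≥0∞)}) ≤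
        ENNReal.ofReal δ * P (Λ ∩ {ω | X a ω < δ}) := by
      rw [hform a _ (hΛa.inter hVa)]
      have hb : ∫ ω in Λ ∩ {ω | X a ω < δ}, X a ω ∂P ≤
          δ * (P (Λ ∩ {ω | X a ω < δ})).toReal := by
        have := setIntegral_mono_on ((hint a).integrableOn)
          (integrableOn_const (measure_lt_top P _).ne)
          (ℱ.le a _ (hΛa.inter hVa)) (fun x hx => le_of_lt hx.2)
        rwa [setIntegral_const, smul_eq_mul, mul_comm] at this
      calc ENNReal.ofReal (∫ ω in Λ ∩ {ω | X a ω < δ}, X a ω ∂P)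
          ≤ ENNReal.ofReal (δ * (P (Λ ∩ {ω | X a ω < δ})).toReal) := ENNReal.ofReal_le_ofReal hb
        _ = ENNReal.ofReal δ * P (Λ ∩ {ω | X a ω < δ}) := by
            rw [ENNReal.ofReal_mul hδ, ENNReal.ofReal_toReal (measure_ne_top P _)]
    have hright := IH (fun t ht => hn t (Finset.mem_insert_of_mem ht))
      (Λ ∩ {ω | X a ω < δ}ᶜ)
      (fun t ht => (hΛ t (Finset.mem_insert_of_mem ht)).inter
        ((ℱ.mono (ha t ht).le) _ hVa.compl))
    calc Q (Λ ∩ (⋃ t ∈ insert a s, {ω | X t ω < δ}) ∩ {ω | lastZero X ω ≤ (n : ℝ≥0∞)})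
        ≤ Q (((Λ ∩ {ω | X a ω < δ}) ∩ {ω | lastZero X ω ≤ (a : ℝ≥0∞)}) ∪
            ((Λ ∩ {ω | X a ω < δ}ᶜ) ∩ (⋃ t ∈ s, {ω | X t ω < δ}) ∩
              {ω | lastZero X ω ≤ (n : ℝ≥0∞)})) := measure_mono hsubset
      _ ≤ _ + _ := measure_union_le _ _
      _ ≤ ENNReal.ofReal δ * P (Λ ∩ {ω | X a ω < δ}) +
            ENNReal.ofReal δ * P (Λ ∩ {ω | X a ω < δ}ᶜ) := add_le_add hleft hright
      _ = ENNReal.ofReal δ * (P (Λ ∩ {ω | X a ω < δ}) + P (Λ ∩ {ω | X a ω < δ}ᶜ)) := by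
            rw [mul_add]
      _ = ENNReal.ofReal δ * P Λ := by
            rw [← Set.diff_eq, measure_inter_add_diff Λ (ℱ.le a _ hVa)]

/-- On the event `{A_∞ = ∞}`, any density martingale `(M_t(F))_{t≥0}` tends to `0`
`P`-almost surely as `t → ∞`. -/
theorem density_martingale_tendsto_zero_on_Ainf_infinite
    {m0 : MeasurableSpace Ω} (ℱ : Filtration ℝ≥0 m0) (P : Measure Ω)
    [IsProbabilityMeasure P]
    (hnat : NaturalConditions ℱ P)
    (hgen : (⨆ t : ℝ≥0, (ℱ t : MeasurableSpace Ω)) = m0)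
    (X N A : ℝ≥0 → Ω → ℝ) (hX : ClassSigma ℱ P X N A)
    (Q : Measure Ω) (hQ : AssociatedMeasure ℱ P Q X)
    (F : Ω → ℝ) (hF_nonneg : ∀ ω, 0 ≤ F ω) (hF_int : Integrable F Q)
    (M : ℝ≥0 → Ω → ℝ) (hM : DensityMartingale ℱ P Q F M) :
    ∀ᵐ ω ∂P, Tendsto (fun t => A t ω) atTop atTop →
      Tendsto (fun t => M t ω) atTop (nhds 0) := by
  classical
  obtain ⟨hQσ, hQg, hQform⟩ := hQ
  obtain ⟨hMmart, hMpos, hMcadlag, hMdens⟩ := hM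
  obtain ⟨D, hDc, hDd⟩ := TopologicalSpace.exists_countable_dense ℝ≥0
  obtain ⟨f, hfD⟩ := hDc.exists_eq_range hDd.nonempty
  -- picking a point of the countable dense set in a right neighborhood
  have hpick : ∀ (u : ℝ≥0) (Wst : Set ℝ≥0), Wst ∈ 𝓝[Ici u] u →
      ∃ i : ℕ, u < f i ∧ f i ∈ Wst := by
    intro u Wst hW
    rw [mem_nhdsWithin] at hW
    obtain ⟨O, hO, huO, hOW⟩ := hW
    have hne : (O ∩ Ioi u).Nonempty := by
      rcases Metric.isOpen_iff.1 hO u huO with ⟨r, hr, hball⟩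
      refine ⟨u + Real.toNNReal r / 2, hball ?_, ?_⟩
      · rw [Metric.mem_ball, NNReal.dist_eq]
        have hc : ((u + Real.toNNReal r / 2 : ℝ≥0) : ℝ) - (u : ℝ) = r / 2 := by
          push_cast [Real.coe_toNNReal r hr.le]; ring
        rw [hc, abs_of_nonneg (by linarith)]
        linarith
      · have h2 : 0 < Real.toNNReal r / 2 := half_pos (Real.toNNReal_pos.2 hr)
        exact lt_add_of_pos_right u h2
    obtain ⟨d, hdD, hdO⟩ := hDd.exists_mem_open (hO.inter isOpen_Ioi) hne
    rw [hfD] at hdD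
    obtain ⟨i, rfl⟩ := hdD
    exact ⟨i, hdO.2, hOW ⟨hdO.1, mem_Ici.2 (le_of_lt hdO.2)⟩⟩
  set δk : ℕ → ℝ := fun k => 1 / ((k : ℝ) + 1) with hδkdef
  have hδk : ∀ k, 0 < δk k := fun k => by positivity
  have hXad : Adapted ℱ X := hX.subm.stronglyAdapted.adapted
  set DX : ℕ → ℕ → ℕ → Set Ω :=
    fun k n i => {ω | (n : ℝ≥0) ≤ f i ∧ X (f i) ω < δk k} with hDXdef
  have hDXmeasF : ∀ k n i, MeasurableSet[ℱ (f i)] (DX k n i) := by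
    intro k n i
    by_cases h : (n : ℝ≥0) ≤ f i
    · have he : DX k n i = {ω | X (f i) ω < δk k} := by ext ω; simp [hDXdef, h]
      rw [he]; exact (hXad (f i)) measurableSet_Iio
    · have he : DX k n i = ∅ := by ext ω; simp [hDXdef, h]
      rw [he]; exact @MeasurableSet.empty _ (ℱ (f i))
  have hDXmeas : ∀ k n i, MeasurableSet (DX k n i) :=
    fun k n i => ℱ.le (f i) _ (hDXmeasF k n i)
  set W : ℕ → Set Ω := fun p => ⋃ i, DX (Nat.unpair p).1 (Nat.unpair p).2 i with hWdef
  have hWmeas : ∀ p, MeasurableSet (W p) :=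
    fun p => MeasurableSet.iUnion fun i => hDXmeas _ _ _
  set G2 : Set Ω := ⋂ p, W p with hG2def
  have hG2meas : MeasurableSet G2 := MeasurableSet.iInter hWmeas
  -- Step A : Q (G2 ∩ {g ≤ n}) ≤ δk k
  have hstepA : ∀ (k n : ℕ),
      Q (G2 ∩ {ω | lastZero X ω ≤ ((n : ℝ≥0) : ℝ≥0∞)}) ≤ ENNReal.ofReal (δk k) := by
    intro k n
    have hstage : ∀ j : ℕ,
        Q ((⋃ i ∈ Finset.range j, DX k n i) ∩ {ω | lastZero X ω ≤ ((n : ℝ≥0) : ℝ≥0∞)}) ≤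
          ENNReal.ofReal (δk k) := by
      intro j
      set s : Finset ℝ≥0 := ((Finset.range j).image f).filter (fun t => (n : ℝ≥0) ≤ t) with hsdef
      have hUeq : (⋃ t ∈ s, {ω | X t ω < δk k}) = ⋃ i ∈ Finset.range j, DX k n i := by
        ext ω
        simp only [mem_iUnion, hsdef, Finset.mem_filter, Finset.mem_image, Finset.mem_range,
          hDXdef, mem_setOf_eq, exists_prop]
        constructor
        · rintro ⟨t, ⟨⟨i, hij, rfl⟩, hnt⟩, hlt⟩; exact ⟨i, hij, hnt, hlt⟩
        · rintro ⟨i, hij, hnt, hlt⟩; exact ⟨f i, ⟨⟨i, hij, rfl⟩, hnt⟩, hlt⟩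
      have hq := qbound_aux ℱ P Q hXad hX.subm.integrable hQform (hδk k).le (n : ℝ≥0) s
        (fun t ht => (Finset.mem_filter.1 ht).2) univ (fun t _ => MeasurableSet.univ)
      rw [univ_inter, hUeq] at hq
      simpa [measure_univ] using hq
    have hmono : Monotone (fun j =>
        (⋃ i ∈ Finset.range j, DX k n i) ∩ {ω | lastZero X ω ≤ ((n : ℝ≥0) : ℝ≥0∞)}) := by
      intro j j' hj
      refine inter_subset_inter_left _ ?_
      intro ω hω
      simp only [mem_iUnion, Finset.mem_range, exists_prop] at hω ⊢
      obtain ⟨i, hi, hm⟩ := hω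
      exact ⟨i, lt_of_lt_of_le hi hj, hm⟩
    have hcover : G2 ∩ {ω | lastZero X ω ≤ ((n : ℝ≥0) : ℝ≥0∞)} ⊆
        ⋃ j, ((⋃ i ∈ Finset.range j, DX k n i) ∩
          {ω | lastZero X ω ≤ ((n : ℝ≥0) : ℝ≥0∞)}) := by
      rintro ω ⟨hω, hg⟩
      have h3 := mem_iInter.1 hω (Nat.pair k n)
      rw [hWdef] at h3
      simp only [Nat.unpair_pair] at h3
      obtain ⟨i, hi⟩ := mem_iUnion.1 h3
      exact mem_iUnion.2 ⟨i + 1, mem_biUnion (Finset.self_mem_range_succ i) hi, hg⟩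
    calc Q (G2 ∩ {ω | lastZero X ω ≤ ((n : ℝ≥0) : ℝ≥0∞)})
        ≤ Q (⋃ j, ((⋃ i ∈ Finset.range j, DX k n i) ∩
            {ω | lastZero X ω ≤ ((n : ℝ≥0) : ℝ≥0∞)})) := measure_mono hcover
      _ = ⨆ j, Q ((⋃ i ∈ Finset.range j, DX k n i) ∩
            {ω | lastZero X ω ≤ ((n : ℝ≥0) : ℝ≥0∞)}) := hmono.measure_iUnion
      _ ≤ ENNReal.ofReal (δk k) := iSup_le hstage
  have hstepB : ∀ n : ℕ, Q (G2 ∩ {ω | lastZero X ω ≤ ((n : ℝ≥0) : ℝ≥0∞)}) = 0 := by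
    intro n
    refine le_antisymm ?_ zero_le
    have htend : Tendsto (fun k : ℕ => ENNReal.ofReal (δk k)) atTop (𝓝 0) := by
      rw [← ENNReal.ofReal_zero]
      exact ENNReal.tendsto_ofReal
        (by simpa [hδkdef] using tendsto_one_div_add_atTop_nhds_zero_nat (𝕜 := ℝ))
    exact ge_of_tendsto htend (Eventually.of_forall (fun k => hstepA k n))
  have hQG2 : Q G2 = 0 := by
    have hcov : G2 ⊆ (⋃ n : ℕ, (G2 ∩ {ω | lastZero X ω ≤ ((n : ℝ≥0) : ℝ≥0∞)})) ∪
        {ω | lastZero X ω = ∞} := by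
      intro ω hω
      by_cases h : lastZero X ω = ∞
      · exact Or.inr h
      · obtain ⟨n, hn⟩ := ENNReal.exists_nat_gt h
        refine Or.inl (mem_iUnion.2 ⟨n, hω, ?_⟩)
        simp only [mem_setOf_eq]
        exact le_of_lt (by exact_mod_cast hn)
    refine le_antisymm ?_ zero_le
    calc Q G2 ≤ Q (⋃ n : ℕ, (G2 ∩ {ω | lastZero X ω ≤ ((n : ℝ≥0) : ℝ≥0∞)})) +
          Q {ω | lastZero X ω = ∞} := le_trans (measure_mono hcov) (measure_union_le _ _)
      _ ≤ (∑' n : ℕ, Q (G2 ∩ {ω | lastZero X ω ≤ ((n : ℝ≥0) : ℝ≥0∞)})) + 0 := by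
          rw [hQg]
          exact add_le_add (measure_iUnion_le _) le_rfl
      _ = 0 := by rw [ENNReal.tsum_eq_zero.2 hstepB, zero_add]
  set ν : Measure Ω := Q.withDensity (fun ω => ENNReal.ofReal (F ω)) with hνdef
  have hνuniv : ν univ ≠ ∞ := by
    rw [hνdef, withDensity_apply _ MeasurableSet.univ, Measure.restrict_univ,
      ← ofReal_integral_eq_lintegral_ofReal hF_int (Eventually.of_forall hF_nonneg)]
    exact ENNReal.ofReal_ne_top
  have hνG2 : ν G2 = 0 := by
    rw [hνdef, withDensity_apply _ hG2meas, Measure.restrict_eq_zero.2 hQG2,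
      lintegral_zero_measure]
  have hνΛ : ∀ Λ : Set Ω, MeasurableSet Λ → ν Λ = ENNReal.ofReal (∫ ω in Λ, F ω ∂Q) := by
    intro Λ hΛ
    rw [hνdef, withDensity_apply _ hΛ,
      ← ofReal_integral_eq_lintegral_ofReal hF_int.integrableOn (Eventually.of_forall hF_nonneg)]
  set EM : ℕ → ℕ → ℕ → Set Ω :=
    fun k n i => {ω | (n : ℝ≥0) ≤ f i ∧ δk k < M (f i) ω} with hEMdef
  set Bset : ℕ → Set Ω := fun k => ⋂ n : ℕ, ⋃ i, EM k n i with hBdef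
  have hEMmeas : ∀ k n i, MeasurableSet (EM k n i) := by
    intro k n i
    by_cases h : (n : ℝ≥0) ≤ f i
    · have he : EM k n i = {ω | δk k < M (f i) ω} := by ext ω; simp [hEMdef, h]
      rw [he]
      exact ℱ.le (f i) _ ((hMmart.stronglyAdapted (f i)).measurable measurableSet_Ioi)
    · have he : EM k n i = ∅ := by ext ω; simp [hEMdef, h]
      rw [he]; exact MeasurableSet.empty
  have hBmeas : ∀ k, MeasurableSet (Bset k) := by
    intro k
    rw [hBdef]
    exact MeasurableSet.iInter fun n => MeasurableSet.iUnion fun i => hEMmeas k n i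
  have hkey : ∀ k : ℕ, P (G2 ∩ Bset k) = 0 := by
    intro k
    have hε : 0 < δk k := hδk k
    have base : ∀ (m : ℝ≥0) (Λ : Set Ω), MeasurableSet[ℱ m] Λ →
        ENNReal.ofReal (δk k) * P (Λ ∩ Bset k) ≤ ν Λ := by
      intro m Λ hΛ
      obtain ⟨n₀, hn₀⟩ := exists_nat_ge m
      have hΛm0 : MeasurableSet Λ := ℱ.le m _ hΛ
      have hstage : ∀ j : ℕ,
          ENNReal.ofReal (δk k) * P (Λ ∩ ⋃ i ∈ Finset.range j, EM k n₀ i) ≤ ν Λ := by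
        intro j
        set s : Finset ℝ≥0 :=
          ((Finset.range j).image f).filter (fun t => (n₀ : ℝ≥0) ≤ t) with hsdef
        have hsn : ∀ t ∈ s, (n₀ : ℝ≥0) ≤ t := fun t ht => (Finset.mem_filter.1 ht).2
        have hsne : (insert (n₀ : ℝ≥0) s).Nonempty := ⟨_, Finset.mem_insert_self _ _⟩
        set T : ℝ≥0 := (insert (n₀ : ℝ≥0) s).max' hsne with hTdef
        have hn₀T : (n₀ : ℝ≥0) ≤ T := Finset.le_max' _ _ (Finset.mem_insert_self _ _)
        have hmT : m ≤ T := le_trans hn₀ hn₀T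
        have hsT : ∀ t ∈ s, t ≤ T := fun t ht => Finset.le_max' _ _ (Finset.mem_insert_of_mem ht)
        have hΛs : ∀ t ∈ s, MeasurableSet[ℱ t] Λ :=
          fun t ht => ℱ.mono (le_trans hn₀ (hsn t ht)) _ hΛ
        have hUeq : (⋃ t ∈ s, {ω | δk k < M t ω}) = ⋃ i ∈ Finset.range j, EM k n₀ i := by
          ext ω
          simp only [mem_iUnion, hsdef, Finset.mem_filter, Finset.mem_image, Finset.mem_range,
            hEMdef, mem_setOf_eq, exists_prop]
          constructor
          · rintro ⟨t, ⟨⟨i, hij, rfl⟩, hnt⟩, hlt⟩; exact ⟨i, hij, hnt, hlt⟩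
          · rintro ⟨i, hij, hnt, hlt⟩; exact ⟨f i, ⟨⟨i, hij, rfl⟩, hnt⟩, hlt⟩
        have hdoob := doob_aux ℱ P hMmart (ε := δk k) s T hsT Λ hΛs
        have hmono2 : ∫ ω in Λ ∩ ⋃ t ∈ s, {ω | δk k < M t ω}, M T ω ∂P ≤
            ∫ ω in Λ, M T ω ∂P :=
          setIntegral_mono_set (hMmart.integrable T).integrableOn
            (ae_restrict_of_ae (hMpos T)) (HasSubset.Subset.eventuallyLE inter_subset_left)
        have hQP : ∫ ω in Λ, M T ω ∂P = ∫ ω in Λ, F ω ∂Q := (hMdens T Λ (ℱ.mono hmT _ hΛ)).symm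
        rw [← hUeq]
        calc ENNReal.ofReal (δk k) * P (Λ ∩ ⋃ t ∈ s, {ω | δk k < M t ω})
            = ENNReal.ofReal (δk k * (P (Λ ∩ ⋃ t ∈ s, {ω | δk k < M t ω})).toReal) := by
              rw [ENNReal.ofReal_mul hε.le, ENNReal.ofReal_toReal (measure_ne_top P _)]
          _ ≤ ENNReal.ofReal (∫ ω in Λ ∩ ⋃ t ∈ s, {ω | δk k < M t ω}, M T ω ∂P) :=
              ENNReal.ofReal_le_ofReal hdoob
          _ ≤ ENNReal.ofReal (∫ ω in Λ, M T ω ∂P) := ENNReal.ofReal_le_ofReal hmono2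
          _ = ν Λ := by rw [hQP, hνΛ Λ hΛm0]
      have hmonoU : Monotone (fun j => Λ ∩ ⋃ i ∈ Finset.range j, EM k n₀ i) := by
        intro j j' hj
        refine inter_subset_inter_right _ ?_
        intro ω hω
        simp only [mem_iUnion, Finset.mem_range, exists_prop] at hω ⊢
        obtain ⟨i, hi, hm⟩ := hω
        exact ⟨i, lt_of_lt_of_le hi hj, hm⟩
      have hUj : (⋃ j, (Λ ∩ ⋃ i ∈ Finset.range j, EM k n₀ i)) = Λ ∩ ⋃ i, EM k n₀ i := by
        ext ω
        simp only [mem_iUnion, mem_inter_iff, Finset.mem_range, exists_prop]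
        constructor
        · rintro ⟨j, hΛω, i, hij, hm⟩; exact ⟨hΛω, i, hm⟩
        · rintro ⟨hΛω, i, hm⟩; exact ⟨i + 1, hΛω, i, Nat.lt_succ_self i, hm⟩
      have hsup : ENNReal.ofReal (δk k) * P (Λ ∩ ⋃ i, EM k n₀ i) ≤ ν Λ := by
        rw [← hUj, hmonoU.measure_iUnion, ENNReal.mul_iSup]
        exact iSup_le hstage
      refine le_trans (mul_le_mul_right (measure_mono ?_) _) hsup
      refine inter_subset_inter_right Λ ?_
      rw [hBdef]
      exact iInter_subset _ n₀
    -- extension to G2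
    have hstageX : ∀ I j : ℕ, MeasurableSet[ℱ ((Finset.range j).sup f)]
        (⋂ p ∈ Finset.range (I + 1),
          ⋃ i ∈ Finset.range j, DX (Nat.unpair p).1 (Nat.unpair p).2 i) := by
      intro I j
      refine Finset.measurableSet_biInter _ (fun p _ => ?_)
      refine Finset.measurableSet_biUnion _ (fun i hi => ?_)
      exact ℱ.mono (Finset.le_sup hi) _ (hDXmeasF _ _ i)
    have hYIineq : ∀ I : ℕ,
        ENNReal.ofReal (δk k) * P ((⋂ p ∈ Finset.range (I + 1), W p) ∩ Bset k) ≤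
          ν (⋂ p ∈ Finset.range (I + 1), W p) := by
      intro I
      set Z : ℕ → Set Ω := fun j => ⋂ p ∈ Finset.range (I + 1),
        ⋃ i ∈ Finset.range j, DX (Nat.unpair p).1 (Nat.unpair p).2 i with hZdef
      have hZY : ∀ j, Z j ⊆ ⋂ p ∈ Finset.range (I + 1), W p := by
        intro j
        refine iInter₂_mono (fun p hp => ?_)
        intro ω hω
        simp only [mem_iUnion, Finset.mem_range, exists_prop] at hω
        obtain ⟨i, _, hm⟩ := hω
        rw [hWdef]
        exact mem_iUnion.2 ⟨i, hm⟩
      have hZmono : Monotone Z := by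
        intro j j' hj
        refine iInter₂_mono (fun p hp => ?_)
        intro ω hω
        simp only [mem_iUnion, Finset.mem_range, exists_prop] at hω ⊢
        obtain ⟨i, hi, hm⟩ := hω
        exact ⟨i, lt_of_lt_of_le hi hj, hm⟩
      have hZcup : (⋃ j, Z j) = ⋂ p ∈ Finset.range (I + 1), W p := by
        refine subset_antisymm (iUnion_subset hZY) ?_
        intro ω hω
        have hch : ∀ p, p ∈ Finset.range (I + 1) →
            ∃ i, ω ∈ DX (Nat.unpair p).1 (Nat.unpair p).2 i := by
          intro p hp
          have h4 := mem_iInter₂.1 hω p hp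
          rw [hWdef] at h4
          exact mem_iUnion.1 h4
        choose idx hidx using hch
        refine mem_iUnion.2 ⟨(Finset.range (I + 1)).attach.sup (fun q => idx q.1 q.2) + 1, ?_⟩
        rw [hZdef]
        refine mem_iInter₂.2 (fun p hp => ?_)
        refine mem_biUnion (Finset.mem_range.2 (Nat.lt_succ_of_le ?_)) (hidx p hp)
        exact Finset.le_sup (f := fun q => idx q.1 q.2) (Finset.mem_attach _ ⟨p, hp⟩)
      have hPsup : P ((⋂ p ∈ Finset.range (I + 1), W p) ∩ Bset k) =
          ⨆ j, P (Z j ∩ Bset k) := by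
        rw [← hZcup, iUnion_inter]
        exact Monotone.measure_iUnion (fun j j' hj => inter_subset_inter_left _ (hZmono hj))
      rw [hPsup, ENNReal.mul_iSup]
      refine iSup_le (fun j => ?_)
      refine le_trans (base ((Finset.range j).sup f) (Z j) ?_) (measure_mono (hZY j))
      rw [hZdef]
      exact hstageX I j
    have hanti : Antitone (fun I => ⋂ p ∈ Finset.range (I + 1), W p) := by
      intro I I' h
      intro ω hω
      refine mem_iInter₂.2 (fun p hp => ?_)
      exact mem_iInter₂.1 hω p (Finset.mem_range.2
        (lt_of_lt_of_le (Finset.mem_range.1 hp) (by omega)))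
    have hiY : (⋂ I : ℕ, ⋂ p ∈ Finset.range (I + 1), W p) = G2 := by
      ext ω
      rw [hG2def]
      simp only [mem_iInter]
      constructor
      · intro h p
        exact h p p (Finset.self_mem_range_succ p)
      · intro h I p _
        exact h p
    have hνiInf : ν G2 = ⨅ I : ℕ, ν (⋂ p ∈ Finset.range (I + 1), W p) := by
      rw [← hiY]
      refine Antitone.measure_iInter hanti (fun I =>
        (Finset.measurableSet_biInter _ (fun p _ => hWmeas p)).nullMeasurableSet) ⟨0, ?_⟩
      exact ne_top_of_le_ne_top hνuniv (measure_mono (subset_univ _))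
    have hfinal : ENNReal.ofReal (δk k) * P (G2 ∩ Bset k) ≤ ν G2 := by
      rw [hνiInf]
      refine le_iInf (fun I => ?_)
      refine le_trans (mul_le_mul_right (measure_mono (inter_subset_inter_left _ ?_)) _)
        (hYIineq I)
      rw [← hiY]
      exact iInter_subset _ I
    rw [hνG2] at hfinal
    have h0 : ENNReal.ofReal (δk k) * P (G2 ∩ Bset k) = 0 :=
      le_antisymm hfinal zero_le
    rcases mul_eq_zero.1 h0 with h | h
    · exact absurd h (by simp [ENNReal.ofReal_eq_zero, not_le, hε])
    · exact h
  -- final almost-everywhere argument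
  have haeM : ∀ᵐ ω ∂P, ∀ i : ℕ, 0 ≤ M (f i) ω := ae_all_iff.2 fun i => hMpos (f i)
  have haeB : ∀ᵐ ω ∂P, ∀ k : ℕ, ω ∉ G2 ∩ Bset k :=
    ae_all_iff.2 fun k => measure_eq_zero_iff_ae_notMem.1 (hkey k)
  filter_upwards [hX.carriedA, haeM, haeB] with ω hcar hMnn hnB hA
  have hzero : ∀ n : ℝ≥0, ∃ u, n ≤ u ∧ X u ω = 0 := by
    intro n
    by_contra hcon
    push_neg at hcon
    have hflat : ∀ t, n ≤ t → A t ω = A n ω := by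
      intro t ht
      exact hcar n t ht (fun u hu => hcon u hu.1)
    obtain ⟨T0, hT0⟩ := eventually_atTop.1 (hA.eventually_ge_atTop (A n ω + 1))
    have h1 := hT0 (max T0 n) (le_max_left _ _)
    rw [hflat (max T0 n) (le_max_right _ _)] at h1
    linarith
  have hG2mem : ω ∈ G2 := by
    rw [hG2def]
    refine mem_iInter.2 (fun p => ?_)
    obtain ⟨u, hun, hu0⟩ := hzero ((Nat.unpair p).2 : ℝ≥0)
    have hrc := (hX.cadlagX ω).1 u
    have hmem : {v : ℝ≥0 | X v ω < δk (Nat.unpair p).1} ∈ 𝓝[Ici u] u := by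
      have h2 : Iio (δk (Nat.unpair p).1) ∈ 𝓝 (X u ω) :=
        Iio_mem_nhds (by rw [hu0]; exact hδk _)
      exact hrc h2
    obtain ⟨i, hui, hiW⟩ := hpick u _ hmem
    rw [hWdef]
    refine mem_iUnion.2 ⟨i, ?_⟩
    rw [hDXdef]
    exact ⟨le_trans hun hui.le, hiW⟩
  have hnotB : ∀ k : ℕ, ∃ n : ℕ, ∀ i, (n : ℝ≥0) ≤ f i → M (f i) ω ≤ δk k := by
    intro k
    have h1 : ω ∉ Bset k := fun hB => (hnB k) ⟨hG2mem, hB⟩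
    rw [hBdef] at h1
    simp only [mem_iInter, mem_iUnion, hEMdef, mem_setOf_eq, not_forall, not_exists,
      not_and, not_lt] at h1
    exact h1
  rw [Metric.tendsto_atTop]
  intro ε' hε'
  obtain ⟨k, hk⟩ := exists_nat_one_div_lt hε'
  obtain ⟨n, hn⟩ := hnotB k
  refine ⟨(n : ℝ≥0), fun t ht => ?_⟩
  have hle : M t ω ≤ δk k := by
    by_contra hcon
    push_neg at hcon
    have hmem : {v : ℝ≥0 | δk k < M v ω} ∈ 𝓝[Ici t] t :=
      (hMcadlag ω).1 t (Ioi_mem_nhds hcon)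
    obtain ⟨i, hti, hiW⟩ := hpick t _ hmem
    exact absurd hiW (not_lt.2 (hn i (le_trans ht hti.le)))
  have hge : 0 ≤ M t ω := by
    by_contra hcon
    push_neg at hcon
    have hmem : {v : ℝ≥0 | M v ω < 0} ∈ 𝓝[Ici t] t :=
      (hMcadlag ω).1 t (Iio_mem_nhds hcon)
    obtain ⟨i, _, hiW⟩ := hpick t _ hmem
    exact absurd (hMnn i) (not_le.2 hiW)
  rw [Real.dist_eq, sub_zero, abs_of_nonneg hge]
  calc M t ω ≤ δk k := hle
    _ < ε' := by simpa [hδkdef] using hk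
end
end

section
/- Let X be of class (Σ), let Q be the measure associated with X, assume A_∞ = ∞ P-almost surely and assume the exponential identity. Then Q-almost everywhere, X_t → ∞ as t → ∞. -/
open MeasureTheory Filter Set
open scoped NNReal ENNReal Topology

noncomputable section

variable {Ω : Type*}

instance : Countable ℚ≥0 := by unfold NNRat; exact Subtype.countable
instance : Nonempty ℚ≥0 := ⟨0⟩

theorem aux_mono_iUnion_le {m0 : MeasurableSpace Ω} (μ : Measure Ω) {s : ℕ → Set Ω}
    (hm : Monotone s) {c : ℝ≥0∞} (h : ∀ n, μ (s n) ≤ c) : μ (⋃ n, s n) ≤ c :=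
  le_of_tendsto' (tendsto_measure_iUnion_atTop hm) h

theorem aux_exists_nnrat_btwn {a b : ℝ≥0} (h : a < b) :
    ∃ q : ℚ≥0, a < (q : ℝ≥0) ∧ (q : ℝ≥0) < b := by
  obtain ⟨r, h1, h2⟩ := exists_rat_btwn (show (a : ℝ) < (b : ℝ) from h)
  have hr0 : (0 : ℚ) ≤ r := by exact_mod_cast a.coe_nonneg.trans h1.le
  have hcast : ((r.toNNRat : ℝ≥0) : ℝ) = (r : ℝ) := by
    have h' : ((r.toNNRat : ℝ≥0) : ℝ) = ((r.toNNRat : ℚ) : ℝ) := rfl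
    rw [h', Rat.coe_toNNRat r hr0]
  refine ⟨r.toNNRat, ?_, ?_⟩
  · rw [← NNReal.coe_lt_coe, hcast]; exact h1
  · rw [← NNReal.coe_lt_coe, hcast]; exact h2

/-- From right-continuity: if `f t < ε` and `t < b`, there is a rational time
`q ∈ (t, b)` with `f q < ε`. -/
theorem aux_exists_rat_dip (f : ℝ≥0 → ℝ) (t : ℝ≥0)
    (hrc : Tendsto f (nhdsWithin t (Set.Ici t)) (𝓝 (f t))) {ε : ℝ} (hft : f t < ε)
    {b : ℝ≥0} (htb : t < b) :
    ∃ q : ℚ≥0, t < (q : ℝ≥0) ∧ (q : ℝ≥0) < b ∧ f (q : ℝ≥0) < ε := by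
  have hmem : {s : ℝ≥0 | f s < ε} ∈ nhdsWithin t (Set.Ici t) := hrc (Iio_mem_nhds hft)
  rw [mem_nhdsGE_iff_exists_Ico_subset] at hmem
  obtain ⟨u, hu, hsub⟩ := hmem
  obtain ⟨q, hq1, hq2⟩ := aux_exists_nnrat_btwn (show t < min b u from lt_min htb hu)
  exact ⟨q, hq1, (hq2.trans_le (min_le_left _ _)),
    hsub ⟨hq1.le, hq2.trans_le (min_le_right _ _)⟩⟩

/-- The "first dip" piece at rational time `q` among the grid `S`. -/
def dipPiece (X : ℝ≥0 → Ω → ℝ) (ε : ℝ) (S : Finset ℚ≥0) (q : ℚ≥0) : Set Ω :=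
  {ω | X (q : ℝ≥0) ω < ε} ∩
    ⋂ (r : ℚ≥0) (_ : r ∈ S) (_ : r < q), {ω | ¬ X (r : ℝ≥0) ω < ε}

theorem aux_dipPiece_subset (X : ℝ≥0 → Ω → ℝ) (ε : ℝ) (S : Finset ℚ≥0) (q : ℚ≥0) :
    dipPiece X ε S q ⊆ {ω | X (q : ℝ≥0) ω < ε} := inter_subset_left

theorem aux_dip_cover (X : ℝ≥0 → Ω → ℝ) (ε : ℝ) (S : Finset ℚ≥0) :
    (⋃ q ∈ S, {ω | X (q : ℝ≥0) ω < ε}) = ⋃ q ∈ S, dipPiece X ε S q := by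
  classical
  apply Subset.antisymm
  · intro ω hω
    simp only [mem_iUnion, exists_prop] at hω ⊢
    obtain ⟨q, hqS, hq⟩ := hω
    have hne : (S.filter fun r : ℚ≥0 => X (r : ℝ≥0) ω < ε).Nonempty :=
      ⟨q, Finset.mem_filter.2 ⟨hqS, hq⟩⟩
    have hq₀ := Finset.min'_mem _ hne
    rw [Finset.mem_filter] at hq₀
    refine ⟨Finset.min' _ hne, hq₀.1, hq₀.2, ?_⟩
    refine mem_iInter.2 fun r => mem_iInter.2 fun hrS => mem_iInter.2 fun hrq => ?_
    intro hrd
    exact absurd (Finset.min'_le _ r (Finset.mem_filter.2 ⟨hrS, hrd⟩)) (not_le.2 hrq)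
  · exact iUnion₂_mono fun q _ => aux_dipPiece_subset X ε S q

theorem aux_dip_disjoint (X : ℝ≥0 → Ω → ℝ) (ε : ℝ) (S : Finset ℚ≥0) :
    Set.Pairwise ↑S (Function.onFun Disjoint (dipPiece X ε S)) := by
  intro q _ q' _ hne
  rcases (Ne.lt_or_gt hne) with h | h
  · refine Set.disjoint_left.2 fun ω hω hω' => ?_
    have h2 := mem_iInter.1 (mem_iInter.1 (mem_iInter.1 hω'.2 q) (by simpa using ‹q ∈ ↑S›)) h
    exact h2 hω.1
  · refine Set.disjoint_left.2 fun ω hω hω' => ?_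
    have h2 := mem_iInter.1 (mem_iInter.1 (mem_iInter.1 hω.2 q') (by simpa using ‹q' ∈ ↑S›)) h
    exact h2 hω'.1

theorem aux_dip_mble {m0 : MeasurableSpace Ω} (ℱ : Filtration ℝ≥0 m0)
    {X : ℝ≥0 → Ω → ℝ} (hadX : Adapted ℱ X) (ε : ℝ) (S : Finset ℚ≥0) (q : ℚ≥0) :
    MeasurableSet[ℱ (q : ℝ≥0)] (dipPiece X ε S q) := by
  apply MeasurableSet.inter
  · exact measurableSet_lt (hadX _) measurable_const
  · refine MeasurableSet.iInter fun r => MeasurableSet.iInter fun _ =>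
      MeasurableSet.iInter fun hrq => ?_
    have hle : (r : ℝ≥0) ≤ (q : ℝ≥0) := by exact_mod_cast hrq.le
    exact (ℱ.mono hle) _ (measurableSet_lt (hadX _) measurable_const).compl

theorem aux_Q_dip {m0 : MeasurableSpace Ω} (ℱ : Filtration ℝ≥0 m0) (P Q : Measure Ω)
    [IsProbabilityMeasure P] {X : ℝ≥0 → Ω → ℝ}
    (hadX : Adapted ℱ X) (hint : ∀ t, Integrable (X t) P)
    (hQi : ∀ t : ℝ≥0, ∀ Λ : Set Ω, MeasurableSet[ℱ t] Λ →
      Q (Λ ∩ {ω | lastZero X ω ≤ (t : ℝ≥0∞)}) = ENNReal.ofReal (∫ ω in Λ, X t ω ∂P))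
    {ε : ℝ} (hε : 0 < ε) (t : ℝ≥0) (S : Finset ℚ≥0) (hS : ∀ q ∈ S, t ≤ (q : ℝ≥0)) :
    Q ((⋃ q ∈ S, {ω | X (q : ℝ≥0) ω < ε}) ∩ {ω | lastZero X ω ≤ (t : ℝ≥0∞)}) ≤
      ENNReal.ofReal ε := by
  classical
  rw [aux_dip_cover, iUnion₂_inter]
  refine le_trans (measure_biUnion_finset_le _ _) ?_
  have hmeas : ∀ q ∈ S, MeasurableSet (dipPiece X ε S q) :=
    fun q _ => (ℱ.le _) _ (aux_dip_mble ℱ hadX ε S q)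
  have hstep : ∀ q ∈ S, Q (dipPiece X ε S q ∩ {ω | lastZero X ω ≤ (t : ℝ≥0∞)}) ≤
      ENNReal.ofReal (ε * (P (dipPiece X ε S q)).toReal) := by
    intro q hq
    have hsub : {ω | lastZero X ω ≤ (t : ℝ≥0∞)} ⊆
        {ω | lastZero X ω ≤ ((q : ℝ≥0) : ℝ≥0∞)} := by
      intro ω hω
      simp only [mem_setOf_eq] at hω ⊢
      exact le_trans hω (by exact_mod_cast hS q hq)
    refine le_trans (measure_mono (inter_subset_inter_right _ hsub)) ?_
    rw [hQi (q : ℝ≥0) _ (aux_dip_mble ℱ hadX ε S q)]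
    apply ENNReal.ofReal_le_ofReal
    calc ∫ ω in dipPiece X ε S q, X (q : ℝ≥0) ω ∂P
        ≤ ∫ _ω in dipPiece X ε S q, ε ∂P := by
          refine setIntegral_mono_on (hint _).integrableOn
            (integrableOn_const (measure_ne_top _ _)) (hmeas q hq) ?_
          exact fun ω hω => le_of_lt hω.1
      _ = (P (dipPiece X ε S q)).toReal * ε := by rw [setIntegral_const, smul_eq_mul, Measure.real_def]
      _ = ε * (P (dipPiece X ε S q)).toReal := mul_comm _ _
  refine le_trans (Finset.sum_le_sum hstep) ?_
  rw [← ENNReal.ofReal_sum_of_nonneg (fun q _ => mul_nonneg hε.le ENNReal.toReal_nonneg)]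
  apply ENNReal.ofReal_le_ofReal
  rw [← Finset.mul_sum]
  have hsum : ∑ q ∈ S, (P (dipPiece X ε S q)).toReal ≤ 1 := by
    have h1 : ∑ q ∈ S, (P (dipPiece X ε S q)).toReal =
        (∑ q ∈ S, P (dipPiece X ε S q)).toReal :=
      (ENNReal.toReal_sum fun q _ => measure_ne_top P _).symm
    rw [h1, ← measure_biUnion_finset (aux_dip_disjoint X ε S) hmeas]
    calc (P (⋃ q ∈ S, dipPiece X ε S q)).toReal
        ≤ (P univ).toReal :=
          ENNReal.toReal_mono (measure_ne_top _ _) (measure_mono (subset_univ _))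
      _ = 1 := by simp
  calc ε * ∑ q ∈ S, (P (dipPiece X ε S q)).toReal ≤ ε * 1 :=
        mul_le_mul_of_nonneg_left hsum hε.le
    _ = ε := mul_one ε

/-- If `A_∞ = ∞` `P`-a.s. then, under the exponential identity, `X_t → ∞`
`Q`-almost everywhere. -/
theorem X_tendsto_atTop_Q_ae
    {m0 : MeasurableSpace Ω} (ℱ : Filtration ℝ≥0 m0) (P : Measure Ω)
    [IsProbabilityMeasure P]
    (hnat : NaturalConditions ℱ P)
    (hgen : (⨆ t : ℝ≥0, (ℱ t : MeasurableSpace Ω)) = m0)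
    (X N A : ℝ≥0 → Ω → ℝ) (hX : ClassSigma ℱ P X N A)
    (Q : Measure Ω) (hQ : AssociatedMeasure ℱ P Q X)
    (hAinf : ∀ᵐ ω ∂P, Tendsto (fun t => A t ω) atTop atTop)
    (hexp : ExpIdentity ℱ P Q X A) :
    ∀ᵐ ω ∂Q, Tendsto (fun t => X t ω) atTop atTop := by
  classical
  obtain ⟨hQsf, hQg, hQi⟩ := hQ
  obtain ⟨e, he⟩ := exists_surjective_nat ℚ≥0
  have hXmeas : ∀ t : ℝ≥0, Measurable (X t) := fun t =>
    ((hX.subm.stronglyAdapted t).measurable).mono (ℱ.le t) le_rfl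
  have hAmeas : ∀ t : ℝ≥0, Measurable (A t) := fun t =>
    (hX.adaptedA t).mono (ℱ.le t) le_rfl
  have hXint : ∀ t : ℝ≥0, Integrable (X t) P := fun t => hX.subm.integrable t
  have hA0 : ∀ (t : ℝ≥0) (ω : Ω), 0 ≤ A t ω := fun t ω =>
    le_of_eq_of_le (hX.zeroA ω).symm (hX.monoA ω (zero_le (a := t)))
  have hexple : ∀ (t : ℝ≥0) (ω : Ω), Real.exp (-(A t ω)) ≤ 1 := fun t ω => by
    rw [← Real.exp_zero]
    exact Real.exp_le_exp.2 (by simpa using hA0 t ω)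
  set F : Ω → ℝ := fun ω => ⨅ s : ℝ≥0, Real.exp (-(A s ω)) with hFdef
  have hbddb : ∀ ω, BddBelow (Set.range fun s : ℝ≥0 => Real.exp (-(A s ω))) :=
    fun ω => ⟨0, by rintro x ⟨s, rfl⟩; exact (Real.exp_pos _).le⟩
  have hbddn : ∀ ω, BddBelow (Set.range fun n : ℕ => Real.exp (-(A (n : ℝ≥0) ω))) :=
    fun ω => ⟨0, by rintro x ⟨n, rfl⟩; exact (Real.exp_pos _).le⟩
  have hF0 : ∀ ω, 0 ≤ F ω := fun ω => le_ciInf fun s => (Real.exp_pos _).le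
  have hFle : ∀ (ω : Ω) (s : ℝ≥0), F ω ≤ Real.exp (-(A s ω)) := fun ω s => ciInf_le (hbddb ω) s
  have hFeqN : ∀ ω, F ω = ⨅ n : ℕ, Real.exp (-(A (n : ℝ≥0) ω)) := by
    intro ω
    refine le_antisymm (le_ciInf fun n => hFle ω _) (le_ciInf fun s => ?_)
    obtain ⟨n, hn⟩ := exists_nat_ge s
    exact le_trans (ciInf_le (hbddn ω) n) (Real.exp_le_exp.2 (neg_le_neg (hX.monoA ω hn)))
  have htendF : ∀ ω, Tendsto (fun n : ℕ => Real.exp (-(A (n : ℝ≥0) ω))) atTop (𝓝 (F ω)) := by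
    intro ω
    rw [hFeqN ω]
    refine tendsto_atTop_ciInf (fun m n hmn => ?_) (hbddn ω)
    exact Real.exp_le_exp.2 (neg_le_neg (hX.monoA ω (by exact_mod_cast hmn)))
  have hFmeas : Measurable F :=
    measurable_of_tendsto_metrizable
      (fun n => Real.measurable_exp.comp (hAmeas _).neg) (tendsto_pi_nhds.2 htendF)
  -- `Q`-null sets from `P`-null sets at finite horizons
  have hQnull : ∀ (v : ℝ≥0) (Λ : Set Ω), MeasurableSet[ℱ v] Λ → P Λ = 0 → Q Λ = 0 := by
    intro v Λ hΛ hPΛ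
    have hsub : Λ ⊆ {ω | lastZero X ω = ∞} ∪
        ⋃ n : ℕ, Λ ∩ {ω | lastZero X ω ≤ ((v + (n : ℝ≥0) : ℝ≥0) : ℝ≥0∞)} := by
      intro ω hω
      by_cases hg' : lastZero X ω = ∞
      · exact Or.inl hg'
      · obtain ⟨n, hn⟩ := ENNReal.exists_nat_gt hg'
        refine Or.inr (mem_iUnion.2 ⟨n, hω, ?_⟩)
        simp only [mem_setOf_eq]
        refine le_trans hn.le ?_
        push_cast
        exact le_add_self
    have hz : ∀ n : ℕ, Q (Λ ∩ {ω | lastZero X ω ≤ ((v + (n : ℝ≥0) : ℝ≥0) : ℝ≥0∞)}) = 0 := by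
      intro n
      rw [hQi (v + (n : ℝ≥0)) Λ (ℱ.mono le_self_add _ hΛ), Measure.restrict_eq_zero.2 hPΛ,
        integral_zero_measure, ENNReal.ofReal_zero]
    refine le_antisymm ?_ (zero_le (a := _))
    refine le_trans (measure_mono hsub) (le_trans (measure_union_le _ _) ?_)
    refine le_trans (add_le_add hQg.le (measure_iUnion_le _)) ?_
    have hz' : ∀ n : ℕ, Q (Λ ∩ {ω | lastZero X ω ≤ (v : ℝ≥0∞) + (n : ℝ≥0∞)}) = 0 := by
      intro n
      have h := hz n
      push_cast at h
      exact h
    simp [hz']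
  -- integrability of `M t`
  have hMint : ∀ t : ℝ≥0, Integrable (fun ω => Real.exp (-(A t ω)) * (1 + X t ω)) P := by
    intro t
    refine Integrable.mono' ((integrable_const (1 : ℝ)).add (hXint t))
      ((Real.measurable_exp.comp (hAmeas t).neg).mul
        (measurable_const.add (hXmeas t))).aestronglyMeasurable ?_
    refine Filter.Eventually.of_forall fun ω => ?_
    rw [Real.norm_eq_abs,
      abs_of_nonneg (mul_nonneg (Real.exp_pos _).le (by nlinarith [hX.nonneg t ω]))]
    calc Real.exp (-(A t ω)) * (1 + X t ω) ≤ 1 * (1 + X t ω) :=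
          mul_le_mul_of_nonneg_right (hexple t ω) (by nlinarith [hX.nonneg t ω])
      _ = 1 + X t ω := one_mul _
  -- the finite measure ρ = F·Q and its values on ℱ_t-sets
  set ρ : Measure Ω := Q.withDensity (fun ω => ENNReal.ofReal (F ω)) with hρdef
  have key : ∀ (t : ℝ≥0) (Λ : Set Ω), MeasurableSet[ℱ t] Λ →
      ρ Λ = ENNReal.ofReal (∫ ω in Λ, Real.exp (-(A t ω)) * (1 + X t ω) ∂P) := by
    intro t Λ hΛ
    have hΛm : MeasurableSet Λ := (ℱ.le t) _ hΛ
    have hexpt : ∫ ω in Λ, F ω ∂Q = ∫ ω in Λ, Real.exp (-(A t ω)) * (1 + X t ω) ∂P :=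
      hexp t Λ hΛ
    rw [hρdef, withDensity_apply _ hΛm]
    by_cases hInt : IntegrableOn F Λ Q
    · rw [← ofReal_integral_eq_lintegral_ofReal hInt
        (Filter.Eventually.of_forall fun ω => hF0 ω), hexpt]
    · exfalso
      have h0 : ∫ ω in Λ, F ω ∂Q = 0 := integral_undef hInt
      rw [h0] at hexpt
      have hM0 : (fun ω => Real.exp (-(A t ω)) * (1 + X t ω)) =ᵐ[P.restrict Λ] 0 :=
        (integral_eq_zero_iff_of_nonneg_ae
          (Filter.Eventually.of_forall fun ω => mul_nonneg (Real.exp_pos _).le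
            (by nlinarith [hX.nonneg t ω]))
          (hMint t).integrableOn).1 hexpt.symm
      simp only [Filter.EventuallyEq, Pi.zero_apply] at hM0
      have hM0' := ae_iff.1 hM0
      have huniv : {ω : Ω | ¬ Real.exp (-(A t ω)) * (1 + X t ω) = 0} = univ := by
        ext ω
        simp only [mem_setOf_eq, mem_univ, iff_true]
        have hpos : (0:ℝ) < Real.exp (-(A t ω)) * (1 + X t ω) :=
          mul_pos (Real.exp_pos _) (by nlinarith [hX.nonneg t ω])
        exact ne_of_gt hpos
      rw [huniv, Measure.restrict_apply_univ] at hM0'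
      have hQΛ : Q Λ = 0 := hQnull t Λ hΛ hM0'
      exact hInt (by rw [IntegrableOn, Measure.restrict_eq_zero.2 hQΛ]; exact integrable_zero_measure)
  -- Part I : `Q`-a.e., `A` does not increase after `g`; hence `F > 0` `Q`-a.e.
  have lemA : ∀ t u : ℕ, t ≤ u →
      Q ({ω | A ((t : ℕ) : ℝ≥0) ω + 1 < A ((u : ℕ) : ℝ≥0) ω} ∩
        {ω | lastZero X ω ≤ (((t : ℕ) : ℝ≥0) : ℝ≥0∞)}) = 0 := by
    intro t u htu
    have htu' : ((t : ℕ) : ℝ≥0) ≤ ((u : ℕ) : ℝ≥0) := by exact_mod_cast htu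
    refine le_antisymm ?_ (zero_le (a := _))
    have key2 : ∀ ε : ℝ, 0 < ε →
        Q ({ω | A ((t : ℕ) : ℝ≥0) ω + 1 < A ((u : ℕ) : ℝ≥0) ω} ∩
          {ω | lastZero X ω ≤ (((t : ℕ) : ℝ≥0) : ℝ≥0∞)}) ≤ ENNReal.ofReal ε := by
      intro ε hε
      set S : ℕ → Finset ℚ≥0 := fun m => ((Finset.range m).image e).filter
        (fun q : ℚ≥0 => ((t : ℕ) : ℝ≥0) ≤ (q : ℝ≥0) ∧ (q : ℝ≥0) ≤ ((u : ℕ) : ℝ≥0)) with hSdef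
      set V : ℕ → Set Ω := fun m => ⋃ q ∈ S m, {ω | X (q : ℝ≥0) ω < ε} with hVdef
      have hSmono : ∀ {m m' : ℕ}, m ≤ m' → S m ⊆ S m' := by
        intro m m' h
        exact Finset.filter_subset_filter _ (Finset.image_subset_image (Finset.range_subset_range.2 h))
      have hVmono : Monotone V := by
        intro m m' h ω hω
        obtain ⟨q, hq, hx⟩ := mem_iUnion₂.1 hω
        exact mem_iUnion₂.2 ⟨q, hSmono h hq, hx⟩
      have hmemW : ∀ (q : ℚ≥0) (ω : Ω), ((t : ℕ) : ℝ≥0) ≤ (q : ℝ≥0) →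
          (q : ℝ≥0) ≤ ((u : ℕ) : ℝ≥0) → X (q : ℝ≥0) ω < ε → ω ∈ ⋃ m, V m := by
        intro q ω h1 h2 h3
        obtain ⟨i, rfl⟩ := he q
        refine mem_iUnion.2 ⟨i + 1, mem_iUnion₂.2 ⟨e i, ?_, h3⟩⟩
        exact Finset.mem_filter.2
          ⟨Finset.mem_image.2 ⟨i, Finset.mem_range.2 (Nat.lt_succ_self i), rfl⟩, h1, h2⟩
      have hsplit : {ω | A ((t : ℕ) : ℝ≥0) ω + 1 < A ((u : ℕ) : ℝ≥0) ω} ∩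
          {ω | lastZero X ω ≤ (((t : ℕ) : ℝ≥0) : ℝ≥0∞)} ⊆
          ({ω | A ((t : ℕ) : ℝ≥0) ω + 1 < A ((u : ℕ) : ℝ≥0) ω} \ ⋃ m, V m) ∪
          ⋃ m, (V m ∩ {ω | lastZero X ω ≤ (((t : ℕ) : ℝ≥0) : ℝ≥0∞)}) := by
        intro ω hω
        by_cases hωW : ω ∈ ⋃ m, V m
        · obtain ⟨m, hm⟩ := mem_iUnion.1 hωW
          exact Or.inr (mem_iUnion.2 ⟨m, hm, hω.2⟩)
        · exact Or.inl ⟨hω.1, hωW⟩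
      have hnull : Q ({ω | A ((t : ℕ) : ℝ≥0) ω + 1 < A ((u : ℕ) : ℝ≥0) ω} \ ⋃ m, V m) = 0 := by
        refine hQnull ((u : ℕ) : ℝ≥0) _ ?_ ?_
        · apply MeasurableSet.diff
          · exact measurableSet_lt
              ((((hX.adaptedA _).mono (ℱ.mono htu') le_rfl)).add measurable_const)
              (hX.adaptedA _)
          · refine MeasurableSet.iUnion fun m => ?_
            rw [hVdef]
            refine Finset.measurableSet_biUnion _ fun q hq => ?_
            exact (ℱ.mono (Finset.mem_filter.1 hq).2.2) _
              (measurableSet_lt (hX.subm.stronglyAdapted _).measurable measurable_const)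
        · refine measure_mono_null ?_ (ae_iff.1 hX.carriedA)
          rintro ω ⟨hω1, hω2⟩
          simp only [mem_setOf_eq] at hω1 ⊢
          intro hprop
          have hnz : ∀ v ∈ Icc ((t : ℕ) : ℝ≥0) ((u : ℕ) : ℝ≥0), X v ω ≠ 0 := by
            rintro v ⟨hv1, hv2⟩ hX0
            rcases eq_or_lt_of_le hv2 with heq | hvlt
            · refine hω2 (hmemW ((u : ℕ) : ℚ≥0) ω ?_ ?_ ?_)
              · rw [NNRat.cast_natCast]; exact htu'
              · rw [NNRat.cast_natCast]
              · rw [NNRat.cast_natCast, ← heq, hX0]; exact hε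
            · obtain ⟨q, hq1, hq2, hq3⟩ := aux_exists_rat_dip (fun s => X s ω) v
                ((hX.cadlagX ω).1 v) (by simpa [hX0] using hε) hvlt
              exact hω2 (hmemW q ω (le_trans hv1 hq1.le) hq2.le hq3)
          exact absurd (hprop _ _ htu' hnz) (by linarith)
      refine le_trans (measure_mono hsplit) (le_trans (measure_union_le _ _) ?_)
      rw [hnull, zero_add]
      refine aux_mono_iUnion_le Q (fun m m' h => inter_subset_inter_left _ (hVmono h)) ?_
      intro m
      have hQd := aux_Q_dip ℱ P Q hX.subm.stronglyAdapted.adapted hXint hQi hε ((t : ℕ) : ℝ≥0) (S m)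
        (fun q hq => (Finset.mem_filter.1 hq).2.1)
      refine le_trans (le_of_eq ?_) hQd
      rw [hVdef]
    have hseq : Tendsto (fun n : ℕ => ENNReal.ofReal (1 / (n + 1))) atTop (𝓝 0) := by
      simpa using ENNReal.tendsto_ofReal tendsto_one_div_add_atTop_nhds_zero_nat
    exact ge_of_tendsto' hseq fun n => key2 (1 / (n + 1)) (by positivity)
  have hQF0 : Q {ω | F ω = 0} = 0 := by
    refine le_antisymm ?_ (zero_le (a := _))
    have hsub : {ω | F ω = 0} ⊆ {ω | lastZero X ω = ∞} ∪
        ⋃ t : ℕ, ⋃ u : ℕ, ({ω | A ((t : ℕ) : ℝ≥0) ω + 1 < A (((max t u : ℕ)) : ℝ≥0) ω} ∩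
          {ω | lastZero X ω ≤ (((t : ℕ) : ℝ≥0) : ℝ≥0∞)}) := by
      intro ω hω
      simp only [mem_setOf_eq] at hω
      by_cases hg' : lastZero X ω = ∞
      · exact Or.inl hg'
      · obtain ⟨t, ht⟩ := ENNReal.exists_nat_gt hg'
        have hunb : ∃ u : ℕ, A ((t : ℕ) : ℝ≥0) ω + 1 < A ((u : ℕ) : ℝ≥0) ω := by
          by_contra hcon
          push_neg at hcon
          have hpos : Real.exp (-(A ((t : ℕ) : ℝ≥0) ω + 1)) ≤ F ω := by
            rw [hFeqN ω]
            exact le_ciInf fun n => Real.exp_le_exp.2 (neg_le_neg (hcon n))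
          nlinarith [Real.exp_pos (-(A ((t : ℕ) : ℝ≥0) ω + 1))]
        obtain ⟨u, hu⟩ := hunb
        refine Or.inr (mem_iUnion.2 ⟨t, mem_iUnion.2 ⟨u, ⟨?_, ?_⟩⟩⟩)
        · exact lt_of_lt_of_le hu (hX.monoA ω (by exact_mod_cast Nat.le_max_right t u))
        · exact ht.le
    refine le_trans (measure_mono hsub) (le_trans (measure_union_le _ _) ?_)
    rw [hQg, zero_add]
    refine le_trans (measure_iUnion_le _) ?_
    have hzz : ∀ t : ℕ, Q (⋃ u : ℕ,
        ({ω | A ((t : ℕ) : ℝ≥0) ω + 1 < A (((max t u : ℕ)) : ℝ≥0) ω} ∩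
          {ω | lastZero X ω ≤ (((t : ℕ) : ℝ≥0) : ℝ≥0∞)})) = 0 := by
      intro t
      refine le_antisymm (le_trans (measure_iUnion_le _) ?_) (zero_le (a := _))
      have : ∀ u : ℕ, Q ({ω | A ((t : ℕ) : ℝ≥0) ω + 1 < A (((max t u : ℕ)) : ℝ≥0) ω} ∩
          {ω | lastZero X ω ≤ (((t : ℕ) : ℝ≥0) : ℝ≥0∞)}) = 0 :=
        fun u => lemA t (max t u) (Nat.le_max_left t u)
      simp only [this, tsum_zero, le_refl]
    simp only [hzz, tsum_zero, le_refl]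
  -- Part II : `ρ`-a.e., `X_t → ∞`
  set c : ℕ → ℝ := fun n => ∫ ω, Real.exp (-(A ((n : ℕ) : ℝ≥0) ω)) ∂P with hcdef
  have hexpint : ∀ n : ℕ, Integrable (fun ω => Real.exp (-(A ((n : ℕ) : ℝ≥0) ω))) P := by
    intro n
    refine Integrable.mono' (integrable_const (1 : ℝ))
      (Real.measurable_exp.comp (hAmeas _).neg).aestronglyMeasurable
      (Filter.Eventually.of_forall fun ω => ?_)
    rw [Real.norm_eq_abs, abs_of_pos (Real.exp_pos _)]
    exact hexple _ ω
  have hc0 : Tendsto c atTop (𝓝 0) := by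
    have h := tendsto_integral_of_dominated_convergence (μ := P)
      (F := fun (n : ℕ) ω => Real.exp (-(A ((n : ℕ) : ℝ≥0) ω))) (f := fun _ => (0 : ℝ))
      (bound := fun _ => (1 : ℝ))
      (fun n => (Real.measurable_exp.comp (hAmeas _).neg).aestronglyMeasurable)
      (integrable_const 1)
      (fun n => Filter.Eventually.of_forall fun ω => by
        rw [Real.norm_eq_abs, abs_of_pos (Real.exp_pos _)]
        exact hexple _ ω)
      ?_
    · simpa using h
    · filter_upwards [hAinf] with ω hA
      have h1 : Tendsto (fun n : ℕ => A ((n : ℕ) : ℝ≥0) ω) atTop atTop :=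
        hA.comp tendsto_natCast_atTop_atTop
      exact Real.tendsto_exp_neg_atTop_nhds_zero.comp h1
  set Bset : ℕ → Set Ω := fun k => ⋂ n : ℕ, ⋃ q : ℚ≥0,
    ⋃ (_ : ((n : ℕ) : ℝ≥0) ≤ (q : ℝ≥0)), {ω | X (q : ℝ≥0) ω < (k : ℝ)} with hBdef
  have hρdip : ∀ (n k : ℕ) (S : Finset ℚ≥0), (∀ q ∈ S, ((n : ℕ) : ℝ≥0) ≤ (q : ℝ≥0)) →
      ρ (⋃ q ∈ S, {ω | X (q : ℝ≥0) ω < (k : ℝ)}) ≤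
        ENNReal.ofReal ((1 + (k : ℝ)) * c n) := by
    intro n k S hS
    rw [aux_dip_cover]
    refine le_trans (measure_biUnion_finset_le _ _) ?_
    have hmeas : ∀ q ∈ S, MeasurableSet (dipPiece X (k : ℝ) S q) :=
      fun q _ => (ℱ.le _) _ (aux_dip_mble ℱ hX.subm.stronglyAdapted.adapted _ S q)
    have hintg : Integrable (fun ω => (1 + (k : ℝ)) * Real.exp (-(A ((n : ℕ) : ℝ≥0) ω))) P :=
      (hexpint n).const_mul _
    have hb : ∀ q ∈ S, ρ (dipPiece X (k : ℝ) S q) ≤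
        ENNReal.ofReal (∫ ω in dipPiece X (k : ℝ) S q,
          (1 + (k : ℝ)) * Real.exp (-(A ((n : ℕ) : ℝ≥0) ω)) ∂P) := by
      intro q hq
      rw [key (q : ℝ≥0) _ (aux_dip_mble ℱ hX.subm.stronglyAdapted.adapted _ S q)]
      apply ENNReal.ofReal_le_ofReal
      refine setIntegral_mono_on (hMint _).integrableOn hintg.integrableOn (hmeas q hq) ?_
      intro ω hω
      have h1 : X (q : ℝ≥0) ω < (k : ℝ) := hω.1
      have h2 : A ((n : ℕ) : ℝ≥0) ω ≤ A (q : ℝ≥0) ω := hX.monoA ω (hS q hq)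
      calc Real.exp (-(A (q : ℝ≥0) ω)) * (1 + X (q : ℝ≥0) ω)
          ≤ Real.exp (-(A ((n : ℕ) : ℝ≥0) ω)) * (1 + (k : ℝ)) := by
            apply mul_le_mul (Real.exp_le_exp.2 (neg_le_neg h2)) (by linarith)
              (by nlinarith [hX.nonneg (q : ℝ≥0) ω]) (Real.exp_pos _).le
        _ = (1 + (k : ℝ)) * Real.exp (-(A ((n : ℕ) : ℝ≥0) ω)) := mul_comm _ _
    refine le_trans (Finset.sum_le_sum hb) ?_
    rw [← ENNReal.ofReal_sum_of_nonneg (fun q hq =>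
      setIntegral_nonneg (hmeas q hq) (fun ω _ => by positivity))]
    rw [← integral_biUnion_finset S hmeas (aux_dip_disjoint X _ S)
      (fun q _ => hintg.integrableOn)]
    apply ENNReal.ofReal_le_ofReal
    refine le_trans (setIntegral_le_integral hintg
      (Filter.Eventually.of_forall fun ω => by positivity)) ?_
    rw [integral_const_mul]
  have hρB : ∀ k : ℕ, ρ (Bset k) = 0 := by
    intro k
    refine le_antisymm ?_ (zero_le (a := _))
    have hbound : ∀ n : ℕ, ρ (Bset k) ≤ ENNReal.ofReal ((1 + (k : ℝ)) * c n) := by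
      intro n
      set S : ℕ → Finset ℚ≥0 := fun m => ((Finset.range m).image e).filter
        (fun q : ℚ≥0 => ((n : ℕ) : ℝ≥0) ≤ (q : ℝ≥0)) with hSdef
      have hsub : Bset k ⊆ ⋃ m : ℕ, ⋃ q ∈ S m, {ω | X (q : ℝ≥0) ω < (k : ℝ)} := by
        intro ω hω
        have hn := mem_iInter.1 hω n
        obtain ⟨q, hq⟩ := mem_iUnion.1 hn
        obtain ⟨hq1, hq2⟩ := mem_iUnion.1 hq
        obtain ⟨i, rfl⟩ := he q
        refine mem_iUnion.2 ⟨i + 1, mem_iUnion₂.2 ⟨e i, Finset.mem_filter.2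
          ⟨Finset.mem_image.2 ⟨i, Finset.mem_range.2 (Nat.lt_succ_self i), rfl⟩, hq1⟩, hq2⟩⟩
      refine le_trans (measure_mono hsub) ?_
      refine aux_mono_iUnion_le ρ ?_ fun m => hρdip n k (S m)
        (fun q hq => (Finset.mem_filter.1 hq).2)
      intro m m' h ω hω
      obtain ⟨q, hq, hx⟩ := mem_iUnion₂.1 hω
      refine mem_iUnion₂.2 ⟨q, ?_, hx⟩
      exact Finset.filter_subset_filter _
        (Finset.image_subset_image (Finset.range_subset_range.2 h)) hq
    have hseq : Tendsto (fun n : ℕ => ENNReal.ofReal ((1 + (k : ℝ)) * c n)) atTop (𝓝 0) := by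
      have h := ENNReal.tendsto_ofReal (a := 0) (by simpa using hc0.const_mul (1 + (k : ℝ)))
      simpa using h
    exact ge_of_tendsto' hseq hbound
  -- Combine
  have hmeasBU : MeasurableSet (⋃ k : ℕ, Bset k) := by
    refine MeasurableSet.iUnion fun k => MeasurableSet.iInter fun n =>
      MeasurableSet.iUnion fun q => MeasurableSet.iUnion fun _ => ?_
    exact measurableSet_lt (hXmeas _) measurable_const
  have hρU : ρ (⋃ k : ℕ, Bset k) = 0 :=
    le_antisymm (le_trans (measure_iUnion_le _) (by simp only [hρB, tsum_zero, le_refl]))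
      (zero_le (a := _))
  have hQUF : Q ((⋃ k : ℕ, Bset k) ∩ {ω | ¬ F ω = 0}) = 0 := by
    have h1 : ∫⁻ ω in (⋃ k : ℕ, Bset k), ENNReal.ofReal (F ω) ∂Q = 0 := by
      rw [← withDensity_apply _ hmeasBU]
      exact hρU
    have h2 : (fun ω => ENNReal.ofReal (F ω)) =ᵐ[Q.restrict (⋃ k, Bset k)] 0 :=
      (lintegral_eq_zero_iff hFmeas.ennreal_ofReal).1 h1
    simp only [Filter.EventuallyEq, Pi.zero_apply] at h2
    have h3 := ae_iff.1 h2
    have h4 : {ω : Ω | ¬ F ω = 0} ⊆ {ω | ¬ ENNReal.ofReal (F ω) = 0} := by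
      intro ω hω
      simp only [mem_setOf_eq] at hω ⊢
      intro hc
      exact hω (le_antisymm (ENNReal.ofReal_eq_zero.1 hc) (hF0 ω))
    have hmeasne : MeasurableSet {ω : Ω | ¬ ENNReal.ofReal (F ω) = 0} :=
      (hFmeas.ennreal_ofReal (measurableSet_singleton 0)).compl
    refine le_antisymm ?_ (zero_le (a := _))
    calc Q ((⋃ k, Bset k) ∩ {ω | ¬ F ω = 0})
        ≤ Q ((⋃ k, Bset k) ∩ {ω | ¬ ENNReal.ofReal (F ω) = 0}) :=
          measure_mono (inter_subset_inter_right _ h4)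
      _ = Q.restrict (⋃ k, Bset k) {ω | ¬ ENNReal.ofReal (F ω) = 0} := by
          rw [Measure.restrict_apply hmeasne, inter_comm]
      _ = 0 := h3
  -- final assembly
  rw [ae_iff]
  refine le_antisymm ?_ (zero_le (a := _))
  have hfinal : {ω | ¬ Tendsto (fun t => X t ω) atTop atTop} ⊆
      ((⋃ k : ℕ, Bset k) ∩ {ω | ¬ F ω = 0}) ∪ {ω | F ω = 0} := by
    intro ω hω
    simp only [mem_setOf_eq] at hω
    have hU : ω ∈ ⋃ k : ℕ, Bset k := by
      rw [tendsto_atTop] at hω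
      push_neg at hω
      obtain ⟨b, hb⟩ := hω
      try rw [Filter.not_eventually] at hb
      obtain ⟨k, hk⟩ := exists_nat_ge b
      refine mem_iUnion.2 ⟨k, mem_iInter.2 fun n => ?_⟩
      obtain ⟨s, hs1, hs2⟩ := frequently_atTop.1 hb ((n : ℕ) : ℝ≥0)
      try push_neg at hs2
      obtain ⟨q, hq1, hq2, hq3⟩ := aux_exists_rat_dip (fun r => X r ω) s
        ((hX.cadlagX ω).1 s) (lt_of_lt_of_le hs2 hk)
        (lt_add_of_pos_right s one_pos)
      exact mem_iUnion.2 ⟨q, mem_iUnion.2 ⟨le_trans hs1 hq1.le, hq3⟩⟩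
    by_cases hF : F ω = 0
    · exact Or.inr hF
    · exact Or.inl ⟨hU, hF⟩
  refine le_trans (measure_mono hfinal) (le_trans (measure_union_le _ _) ?_)
  rw [hQUF, hQF0, add_zero]
end
end

section
/- Let X be of class (Σ), let Q be the measure associated with X, assume A_∞ = ∞ P-almost surely and assume the exponential identity (so that X_t → ∞ Q-almost everywhere). Let (F_t)_{t≥0} be a process of class (C) such that F_g is Q-integrable. Then E_P[F_t X_t] → Q[F_∞] as t → ∞. -/
open MeasureTheory Filter Set
open scoped NNReal ENNReal Topology

noncomputable section

variable {Ω : Type*}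

/-- A process `(F_t)` of class (C) with limit `F_∞`: nonnegative, uniformly bounded,
nonincreasing, càdlàg, adapted, eventually frozen at time `g^{[a]}` for some `a > 0`,
with `Q`-integrable limit `F_∞`. -/
structure ClassC {m0 : MeasurableSpace Ω} (ℱ : Filtration ℝ≥0 m0) (Q : Measure Ω)
    (X : ℝ≥0 → Ω → ℝ) (F : ℝ≥0 → Ω → ℝ) (Finf : Ω → ℝ) : Prop where
  nonneg : ∀ t ω, 0 ≤ F t ω
  bdd : ∃ C : ℝ, ∀ t ω, F t ω ≤ C
  anti : ∀ ω, Antitone fun t => F t ω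
  cadlag : ∀ ω, Cadlag fun t => F t ω
  adapted : Adapted ℱ F
  frozen : ∃ a : ℝ, 0 < a ∧ ∀ ω, ∀ t : ℝ≥0,
    lastBelow a X ω ≤ (t : ℝ≥0∞) → F t ω = F (lastBelow a X ω).toNNReal ω
  tendsto : ∀ ω, Tendsto (fun t => F t ω) atTop (nhds (Finf ω))
  integrable : Integrable Finf Q

/-- The value `F_g` of the process `F` at the last zero `g` of `X` (equal to `F_∞`
on `{g = ∞}`). -/
def valueAtLastZero (X : ℝ≥0 → Ω → ℝ) (F : ℝ≥0 → Ω → ℝ) (Finf : Ω → ℝ) (ω : Ω) : ℝ :=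
  if lastZero X ω = ∞ then Finf ω else F (lastZero X ω).toNNReal ω
lemma aux_restrict_le {m0 : MeasurableSpace Ω} (μ : Measure Ω) (s N : Set Ω)
    (hN : MeasurableSet N) (hNμ : μ N = 0) (f g : Ω → ℝ≥0∞)
    (hf : Measurable f) (hg : Measurable g)
    (h : ∀ ω ∈ s, ω ∉ N → f ω ≤ g ω) :
    ∫⁻ ω, f ω ∂(μ.restrict s) ≤ ∫⁻ ω, g ω ∂μ := by
  classical
  set f' : Ω → ℝ≥0∞ := fun ω => if ω ∈ N then 0 else min (f ω) (g ω) with hf'def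
  have hf' : Measurable f' := Measurable.ite hN measurable_const (hf.min hg)
  have hmeq : MeasurableSet {ω | f ω = f' ω} := by
    have heqset : {ω | f ω = f' ω} = {ω | f ω ≤ f' ω} ∩ {ω | f' ω ≤ f ω} := by
      ext ω; simp [le_antisymm_iff]
    rw [heqset]; exact (measurableSet_le hf hf').inter (measurableSet_le hf' hf)
  have hne : MeasurableSet {ω | ¬ f ω = f' ω} := by
    simpa [compl_setOf] using hmeq.compl
  have h1 : ∫⁻ ω, f ω ∂(μ.restrict s) = ∫⁻ ω, f' ω ∂(μ.restrict s) := by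
    refine lintegral_congr_ae ?_
    rw [Filter.EventuallyEq, ae_iff, Measure.restrict_apply hne]
    refine measure_mono_null (fun ω hω => ?_) hNμ
    obtain ⟨hωne, hωs⟩ := hω
    by_contra hωN
    exact hωne (by simp only [hf'def, if_neg hωN, min_eq_left (h ω hωs hωN)])
  have h2 : ∀ ω, f' ω ≤ g ω := by
    intro ω; by_cases hω : ω ∈ N <;> simp [hf'def, hω, min_le_right]
  calc ∫⁻ ω, f ω ∂(μ.restrict s) = ∫⁻ ω, f' ω ∂(μ.restrict s) := h1
    _ ≤ ∫⁻ ω, f' ω ∂μ := lintegral_mono' Measure.restrict_le_self le_rfl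
    _ ≤ ∫⁻ ω, g ω ∂μ := lintegral_mono h2

/-- Penalisation asymptotics for class (C) weights: `E_P[F_t X_t] → Q[F_∞]`. -/
theorem classC_tendsto
    {m0 : MeasurableSpace Ω} (ℱ : Filtration ℝ≥0 m0) (P : Measure Ω)
    [IsProbabilityMeasure P]
    (hnat : NaturalConditions ℱ P)
    (hgen : (⨆ t : ℝ≥0, (ℱ t : MeasurableSpace Ω)) = m0)
    (X N A : ℝ≥0 → Ω → ℝ) (hX : ClassSigma ℱ P X N A)
    (Q : Measure Ω) (hQ : AssociatedMeasure ℱ P Q X)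
    (hAinf : ∀ᵐ ω ∂P, Tendsto (fun t => A t ω) atTop atTop)
    (hexp : ExpIdentity ℱ P Q X A)
    (F : ℝ≥0 → Ω → ℝ) (Finf : Ω → ℝ) (hC : ClassC ℱ Q X F Finf)
    (hFg : Integrable (valueAtLastZero X F Finf) Q) :
    Tendsto (fun t : ℝ≥0 => ∫ ω, F t ω * X t ω ∂P) atTop
      (nhds (∫ ω, Finf ω ∂Q)) := by
  obtain ⟨hsig, hginf, hQt⟩ := hQ
  set S : ℝ≥0 → Set Ω := fun t => {ω | lastZero X ω ≤ (t : ℝ≥0∞)} with hSdef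
  have hXmeas : ∀ t : ℝ≥0, Measurable (X t) :=
    fun t => ((hX.subm.1 t).measurable).mono (ℱ.le t) le_rfl
  have hFmeas : ∀ t : ℝ≥0, Measurable (F t) :=
    fun t => (hC.adapted t).mono (ℱ.le t) le_rfl
  have hFinf_nonneg : ∀ ω, 0 ≤ Finf ω := fun ω =>
    ge_of_tendsto (hC.tendsto ω) (Eventually.of_forall fun t => hC.nonneg t ω)
  have hFinf_le : ∀ (t : ℝ≥0) (ω : Ω), Finf ω ≤ F t ω := fun t ω =>
    le_of_tendsto (hC.tendsto ω)
      (eventually_atTop.2 ⟨t, fun s hs => hC.anti ω hs⟩)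
  -- Transfer identity : ∫⁻ F_t d(Q|_{g ≤ t}) = ∫⁻ F_t X_t dP
  have key : ∀ t : ℝ≥0,
      ∫⁻ ω, ENNReal.ofReal (F t ω) ∂(Q.restrict (S t)) =
      ∫⁻ ω, ENNReal.ofReal (F t ω * X t ω) ∂P := by
    intro t
    have hFt : Measurable[ℱ t] fun ω => ENNReal.ofReal (F t ω) :=
      Measurable.ennreal_ofReal (hC.adapted t)
    have heq : (Q.restrict (S t)).trim (ℱ.le t)
        = (P.withDensity fun ω => ENNReal.ofReal (X t ω)).trim (ℱ.le t) := by
      refine @Measure.ext Ω (ℱ t) _ _ fun Λ hΛ => ?_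
      have hΛ0 : MeasurableSet Λ := (ℱ.le t) _ hΛ
      rw [trim_measurableSet_eq _ hΛ, trim_measurableSet_eq _ hΛ,
        Measure.restrict_apply hΛ0]
      simp only [hSdef]
      rw [hQt t Λ hΛ, withDensity_apply _ hΛ0,
        ofReal_integral_eq_lintegral_ofReal ((hX.subm.integrable t).restrict)
          (Eventually.of_forall fun ω => hX.nonneg t ω)]
    calc ∫⁻ ω, ENNReal.ofReal (F t ω) ∂(Q.restrict (S t))
        = ∫⁻ ω, ENNReal.ofReal (F t ω) ∂((Q.restrict (S t)).trim (ℱ.le t)) :=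
          (lintegral_trim (ℱ.le t) hFt).symm
      _ = ∫⁻ ω, ENNReal.ofReal (F t ω)
            ∂((P.withDensity fun ω => ENNReal.ofReal (X t ω)).trim (ℱ.le t)) := by
          rw [heq]
      _ = ∫⁻ ω, ENNReal.ofReal (F t ω)
            ∂(P.withDensity fun ω => ENNReal.ofReal (X t ω)) :=
          lintegral_trim (ℱ.le t) hFt
      _ = ∫⁻ ω, ((fun ω => ENNReal.ofReal (X t ω)) * fun ω => ENNReal.ofReal (F t ω)) ω ∂P := by
          rw [lintegral_withDensity_eq_lintegral_mul _
            (hXmeas t).ennreal_ofReal (hFmeas t).ennreal_ofReal]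
      _ = ∫⁻ ω, ENNReal.ofReal (F t ω * X t ω) ∂P := by
          refine lintegral_congr fun ω => ?_
          simp only [Pi.mul_apply]
          rw [ENNReal.ofReal_mul (hC.nonneg t ω), mul_comm]
  -- real/ennreal conversions
  have hrealP : ∀ t : ℝ≥0, ∫ ω, F t ω * X t ω ∂P
      = (∫⁻ ω, ENNReal.ofReal (F t ω * X t ω) ∂P).toReal := fun t =>
    integral_eq_lintegral_of_nonneg_ae
      (Eventually.of_forall fun ω => mul_nonneg (hC.nonneg t ω) (hX.nonneg t ω))
      ((hFmeas t).mul (hXmeas t)).aestronglyMeasurable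
  set I : ℝ≥0∞ := ∫⁻ ω, ENNReal.ofReal (Finf ω) ∂Q with hIdef
  have hrealQ : ∫ ω, Finf ω ∂Q = I.toReal :=
    integral_eq_lintegral_of_nonneg_ae (Eventually.of_forall hFinf_nonneg)
      hC.integrable.aestronglyMeasurable
  have hIne : I ≠ ∞ :=
    ne_of_lt (lt_of_le_of_lt (lintegral_mono fun ω => Real.ofReal_le_enorm _)
      hC.integrable.hasFiniteIntegral)
  -- split the lintegral
  set l : ℝ≥0 → ℝ≥0∞ :=
    fun t => ∫⁻ ω, ENNReal.ofReal (Finf ω) ∂(Q.restrict (S t)) with hldef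
  set e : ℝ≥0 → ℝ≥0∞ :=
    fun t => ∫⁻ ω, ENNReal.ofReal (F t ω - Finf ω) ∂(Q.restrict (S t)) with hedef
  have hsplit : ∀ t : ℝ≥0,
      ∫⁻ ω, ENNReal.ofReal (F t ω) ∂(Q.restrict (S t)) = l t + e t := by
    intro t
    have hae : AEMeasurable (fun ω => ENNReal.ofReal (Finf ω)) (Q.restrict (S t)) := by
      exact (ENNReal.measurable_ofReal.comp_aemeasurable
        hC.integrable.aemeasurable).mono_measure Measure.restrict_le_self
    simp only [hldef, hedef]
    rw [← lintegral_add_left' hae]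
    refine lintegral_congr fun ω => ?_
    rw [← ENNReal.ofReal_add (hFinf_nonneg ω) (sub_nonneg.2 (hFinf_le t ω))]
    rw [show Finf ω + (F t ω - Finf ω) = F t ω from by ring]
  -- basic facts about S
  have hSmono : ∀ {s t : ℝ≥0}, s ≤ t → S s ⊆ S t := fun hst ω hω =>
    le_trans hω (ENNReal.coe_le_coe.2 hst)
  have hSfin : ∀ t : ℝ≥0, Q (S t) ≠ ∞ := by
    intro t
    have h := hQt t univ MeasurableSet.univ
    rw [univ_inter] at h
    simp only [hSdef]
    rw [h]; exact ENNReal.ofReal_ne_top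
  -- monotone convergence of l
  set T : ℕ → Set Ω := fun m => toMeasurable Q (S (m : ℝ≥0)) with hTdef
  set T' : ℕ → Set Ω := fun n => ⋂ m, ⋂ (_ : n ≤ m), T m with hT'def
  have hT'meas : ∀ n, MeasurableSet (T' n) := fun n =>
    MeasurableSet.iInter fun m => MeasurableSet.iInter fun _ =>
      measurableSet_toMeasurable Q _
  have hT'mono : Monotone T' := fun a b hab ω hω =>
    mem_iInter₂.2 fun m hm => mem_iInter₂.1 hω m (hab.trans hm)
  have hsub1 : ∀ n : ℕ, S (n : ℝ≥0) ⊆ T' n := fun n =>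
    subset_iInter₂ fun m hm =>
      (hSmono (by exact_mod_cast hm)).trans (subset_toMeasurable Q _)
  have hres : ∀ n : ℕ, Q.restrict (S (n : ℝ≥0)) = Q.restrict (T' n) := by
    intro n
    refine le_antisymm (Measure.restrict_mono (hsub1 n) le_rfl) ?_
    calc Q.restrict (T' n) ≤ Q.restrict (T n) :=
          Measure.restrict_mono (iInter₂_subset n le_rfl) le_rfl
      _ = Q.restrict (S (n : ℝ≥0)) := Measure.restrict_toMeasurable (hSfin _)
  have hITlim : (⨆ n : ℕ, l (n : ℝ≥0)) = I := by
    have hψae : ∀ n : ℕ,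
        AEMeasurable ((T' n).indicator fun ω => ENNReal.ofReal (Finf ω)) Q := by
      intro n
      have hbase : AEMeasurable (fun ω => ENNReal.ofReal (Finf ω)) Q := by
        exact ENNReal.measurable_ofReal.comp_aemeasurable hC.integrable.aemeasurable
      exact hbase.indicator (hT'meas n)
    have hψmono : ∀ ω : Ω,
        Monotone fun n : ℕ => (T' n).indicator (fun ω => ENNReal.ofReal (Finf ω)) ω := by
      intro ω a b hab
      exact indicator_le_indicator_of_subset (hT'mono hab) (fun _ => zero_le) ω
    have h1 : ∀ n : ℕ, l (n : ℝ≥0)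
        = ∫⁻ ω, (T' n).indicator (fun ω => ENNReal.ofReal (Finf ω)) ω ∂Q := by
      intro n
      simp only [hldef]
      rw [hres n, ← lintegral_indicator (hT'meas n)]
    have h2 : (⨆ n : ℕ, l (n : ℝ≥0))
        = ∫⁻ ω, ⨆ n : ℕ, (T' n).indicator (fun ω => ENNReal.ofReal (Finf ω)) ω ∂Q := by
      rw [lintegral_iSup' hψae (Eventually.of_forall hψmono)]
      exact iSup_congr h1
    rw [h2]
    refine lintegral_congr_ae ?_
    have hsubset : {ω | ¬ (⨆ n : ℕ, (T' n).indicator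
        (fun ω => ENNReal.ofReal (Finf ω)) ω) = ENNReal.ofReal (Finf ω)}
        ⊆ {ω | lastZero X ω = ∞} := by
      intro ω hω
      by_contra hne
      apply hω
      obtain ⟨n, hn⟩ := exists_nat_ge (lastZero X ω).toNNReal
      have hmem : ω ∈ T' n := by
        refine hsub1 n ?_
        simp only [hSdef, mem_setOf_eq]
        have hne' : lastZero X ω ≠ ⊤ := by simpa using hne
        rw [← ENNReal.coe_toNNReal hne']
        exact_mod_cast hn
      refine le_antisymm
        (iSup_le fun m => indicator_le_self' (fun _ _ => zero_le) ω)
        (le_iSup_of_le n ?_)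
      rw [indicator_of_mem hmem]
    rw [Filter.EventuallyEq, ae_iff]
    exact measure_mono_null hsubset hginf
  have hlmono : Monotone l := fun a b hab =>
    lintegral_mono' (Measure.restrict_mono (hSmono hab) le_rfl) le_rfl
  have hlsup : (⨆ t : ℝ≥0, l t) = I := by
    refine le_antisymm (iSup_le fun t => ?_) ?_
    · obtain ⟨n, hn⟩ := exists_nat_ge t
      exact le_trans (hlmono hn)
        (le_trans (le_iSup (fun n : ℕ => l (n : ℝ≥0)) n) hITlim.le)
    · rw [← hITlim]; exact iSup_le fun n => le_iSup l (n : ℝ≥0)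
  have hltend : Tendsto l atTop (𝓝 I) := hlsup ▸ tendsto_atTop_iSup hlmono
  -- measurable versions of Finf and valueAtLastZero
  set val := valueAtLastZero X F Finf with hvaldef
  set val' := hFg.aestronglyMeasurable.mk val with hval'def
  have hval'sm : StronglyMeasurable val' := hFg.aestronglyMeasurable.stronglyMeasurable_mk
  have hvaleq : val =ᵐ[Q] val' := hFg.aestronglyMeasurable.ae_eq_mk
  set Finf' := hC.integrable.aestronglyMeasurable.mk Finf with hFinf'def
  have hFinf'sm : StronglyMeasurable Finf' :=
    hC.integrable.aestronglyMeasurable.stronglyMeasurable_mk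
  have hFinfeq : Finf =ᵐ[Q] Finf' := hC.integrable.aestronglyMeasurable.ae_eq_mk
  set Nset := toMeasurable Q ({ω | ¬ val ω = val' ω} ∪ {ω | ¬ Finf ω = Finf' ω}) with hNdef
  have hNmeas : MeasurableSet Nset := measurableSet_toMeasurable Q _
  have hNnull : Q Nset = 0 := by
    rw [hNdef, measure_toMeasurable]
    exact measure_union_null (ae_iff.1 hvaleq) (ae_iff.1 hFinfeq)
  have hoffN : ∀ ω, ω ∉ Nset → val ω = val' ω ∧ Finf ω = Finf' ω := by
    intro ω hω
    have h := fun h' => hω (subset_toMeasurable Q _ h')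
    constructor
    · by_contra hc; exact h (Or.inl hc)
    · by_contra hc; exact h (Or.inr hc)
  -- rewrite e with measurable version
  have heq' : ∀ t : ℝ≥0, e t
      = ∫⁻ ω, ENNReal.ofReal (F t ω - Finf' ω) ∂(Q.restrict (S t)) := by
    intro t
    simp only [hedef]
    refine lintegral_congr_ae ?_
    rw [Filter.EventuallyEq, ae_iff]
    refine measure_mono_null (fun ω hω => ?_)
      (show Q.restrict (S t) Nset = 0 from by
        rw [Measure.restrict_apply hNmeas]
        exact measure_mono_null inter_subset_left hNnull)
    by_contra hc
    exact hω (by rw [(hoffN ω hc).2])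
  -- dominating decay term
  set c' : Ω → ℝ≥0∞ := fun ω => ENNReal.ofReal (val' ω - Finf' ω) with hc'def
  set G : ℝ≥0 → Ω → ℝ≥0∞ :=
    fun t ω => min (ENNReal.ofReal (F t ω - Finf' ω)) (c' ω) with hGdef
  have hGmeas : ∀ t : ℝ≥0, Measurable (G t) := fun t =>
    (((hFmeas t).sub hFinf'sm.measurable).ennreal_ofReal).min
      ((hval'sm.measurable.sub hFinf'sm.measurable).ennreal_ofReal)
  set B : ℝ≥0 → ℝ≥0∞ := fun t => ∫⁻ ω, G t ω ∂Q with hBdef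
  have hebound : ∀ t : ℝ≥0, e t ≤ B t := by
    intro t
    rw [heq' t]
    refine aux_restrict_le Q (S t) Nset hNmeas hNnull _ _
      (((hFmeas t).sub hFinf'sm.measurable).ennreal_ofReal)
      (hGmeas t) ?_
    intro ω hωS hωN
    simp only [hGdef]
    refine le_min le_rfl (ENNReal.ofReal_le_ofReal (sub_le_sub_right ?_ _))
    rw [← (hoffN ω hωN).1]
    have hgt : lastZero X ω ≤ (t : ℝ≥0∞) := hωS
    have hgne : lastZero X ω ≠ ∞ := ne_top_of_le_ne_top ENNReal.coe_ne_top hgt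
    simp only [hvaldef, valueAtLastZero, if_neg hgne]
    refine hC.anti ω ?_
    have h2 : ((lastZero X ω).toNNReal : ℝ≥0∞) ≤ (t : ℝ≥0∞) := by
      rw [ENNReal.coe_toNNReal hgne]; exact hgt
    exact_mod_cast h2
  have hBanti : Antitone B := by
    intro a b hab
    refine lintegral_mono fun ω => ?_
    exact min_le_min (ENNReal.ofReal_le_ofReal (sub_le_sub_right (hC.anti ω hab) _)) le_rfl
  have hcfin : ∫⁻ ω, c' ω ∂Q ≠ ∞ := by
    have hint : Integrable (fun ω => val' ω - Finf' ω) Q :=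
      (hFg.congr hvaleq).sub (hC.integrable.congr hFinfeq)
    exact ne_of_lt (lt_of_le_of_lt
      (lintegral_mono fun ω => Real.ofReal_le_enorm _) hint.hasFiniteIntegral)
  have hBzero : Tendsto B atTop (𝓝 0) := by
    have h1 : Tendsto B atTop (𝓝 (⨅ t, B t)) := tendsto_atTop_iInf hBanti
    have h2 : (⨅ t : ℝ≥0, B t) = 0 := by
      refine le_antisymm ?_ (zero_le)
      have hGanti : Antitone fun n : ℕ => G (n : ℝ≥0) := by
        intro a b hab ω
        exact min_le_min (ENNReal.ofReal_le_ofReal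
          (sub_le_sub_right (hC.anti ω (by exact_mod_cast hab)) _)) le_rfl
      have hfin0 : ∫⁻ ω, G ((0 : ℕ) : ℝ≥0) ω ∂Q ≠ ∞ :=
        ne_of_lt (lt_of_le_of_lt (lintegral_mono fun ω => min_le_right _ _)
          (lt_of_le_of_ne le_top hcfin))
      have h4 : (⨅ n : ℕ, B ((n : ℕ) : ℝ≥0)) = ∫⁻ ω, ⨅ n : ℕ, G (n : ℝ≥0) ω ∂Q :=
        (lintegral_iInf (fun n => hGmeas _) hGanti hfin0).symm
      have hae0 : (fun ω => ⨅ n : ℕ, G (n : ℝ≥0) ω) =ᵐ[Q] fun _ => (0 : ℝ≥0∞) := by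
        have hNae : ∀ᵐ ω ∂Q, ω ∉ Nset := by
          rw [ae_iff]
          simpa using hNnull
        filter_upwards [hNae] with ω hω
        have hFeq := (hoffN ω hω).2
        have h5 : Tendsto (fun n : ℕ => F (n : ℝ≥0) ω) atTop (𝓝 (Finf ω)) :=
          (hC.tendsto ω).comp tendsto_natCast_atTop_atTop
        have h6 := ENNReal.tendsto_ofReal (h5.sub_const (Finf ω))
        rw [sub_self, ENNReal.ofReal_zero] at h6
        have htd : Tendsto (fun n : ℕ => ENNReal.ofReal (F (n : ℝ≥0) ω - Finf' ω))
            atTop (𝓝 0) := by rw [← hFeq]; exact h6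
        have hanti : Antitone fun n : ℕ => ENNReal.ofReal (F (n : ℝ≥0) ω - Finf' ω) :=
          fun a b hab => ENNReal.ofReal_le_ofReal
            (sub_le_sub_right (hC.anti ω (by exact_mod_cast hab)) _)
        have hinf0 : (⨅ n : ℕ, ENNReal.ofReal (F (n : ℝ≥0) ω - Finf' ω)) = 0 :=
          tendsto_nhds_unique (tendsto_atTop_iInf hanti) htd
        refine le_antisymm ?_ (zero_le)
        rw [← hinf0]
        exact iInf_mono fun n => min_le_left _ _
      have h3 : (⨅ n : ℕ, B ((n : ℕ) : ℝ≥0)) = 0 := by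
        rw [h4, lintegral_congr_ae hae0, lintegral_zero]
      exact le_trans (le_iInf fun n : ℕ => iInf_le B ((n : ℕ) : ℝ≥0)) h3.le
    rwa [h2] at h1
  have hezero : Tendsto e atTop (𝓝 0) :=
    tendsto_of_tendsto_of_tendsto_of_le_of_le tendsto_const_nhds hBzero
      (fun t => zero_le) hebound
  have hLtend : Tendsto (fun t => l t + e t) atTop (𝓝 I) := by
    have h := hltend.add hezero
    simpa using h
  have hfinal : Tendsto (fun t : ℝ≥0 => (l t + e t).toReal) atTop (𝓝 I.toReal) :=
    (ENNReal.tendsto_toReal hIne).comp hLtend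
  rw [hrealQ]
  refine hfinal.congr fun t => ?_
  rw [← hsplit t, key t, hrealP t]
end
end

section
/- Let X be of class (Σ), let Q be the measure associated with X, assume A_∞ = ∞ P-almost surely and assume the exponential identity. Let (F_t)_{t≥0} be a process of class (C) such that F_g is Q-integrable and F_∞ is not Q-almost everywhere equal to zero. Then for all sufficiently large t, 0 < E_P[F_t X_t] < ∞, so that the probability measure Q_t := (F_t X_t / E_P[F_t X_t])·P is well defined; and for every s ≥ 0 and every Λ_s ∈ F_s, Q_t[Λ_s] → Q_∞[Λ_s] as t → ∞, where Q_∞ := (F_∞ / Q[F_∞])·Q and 0 < Q[F_∞] < ∞. -/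
open MeasureTheory Filter Set
open scoped NNReal ENNReal Topology

set_option maxHeartbeats 1000000
noncomputable section

variable {Ω : Type*}

lemma aux_tendsto {m0 : MeasurableSpace Ω} (Q : Measure Ω) [SigmaFinite Q]
    (g : Ω → ℝ≥0∞) (hg : Q {ω | g ω = ∞} = 0)
    (h : Ω → ℝ≥0∞) (hh : Measurable h) :
    Tendsto (fun t : ℝ≥0 => ∫⁻ ω, h ω ∂(Q.restrict {ω | g ω ≤ (t : ℝ≥0∞)})) atTop
      (𝓝 (∫⁻ ω, h ω ∂Q)) := by
  set φ : ℝ≥0 → ℝ≥0∞ := fun t => ∫⁻ ω, h ω ∂(Q.restrict {ω | g ω ≤ (t : ℝ≥0∞)}) with hφ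
  have hmono : Monotone φ := by
    intro a b hab
    exact lintegral_mono' (Measure.restrict_mono
      (fun ω hω => le_trans hω (ENNReal.coe_le_coe.2 hab)) le_rfl) le_rfl
  have hsup : (⨆ t, φ t) = ∫⁻ ω, h ω ∂Q := by
    refine le_antisymm (iSup_le fun t => lintegral_mono' Measure.restrict_le_self le_rfl) ?_
    set T : ℕ → Set Ω :=
      fun n => ⋂ (m : ℕ) (_ : n ≤ m), toMeasurable Q {ω | g ω ≤ ((m : ℝ≥0) : ℝ≥0∞)} with hT
    have hTmeas : ∀ n, MeasurableSet (T n) := fun n =>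
      MeasurableSet.iInter fun m => MeasurableSet.iInter fun _ => measurableSet_toMeasurable Q _
    have hTmono : Monotone T := by
      intro a b hab ω hω
      exact mem_iInter₂.2 fun m hm => mem_iInter₂.1 hω m (hab.trans hm)
    have hsubT : ∀ n : ℕ, {ω | g ω ≤ ((n : ℝ≥0) : ℝ≥0∞)} ⊆ T n := by
      intro n ω hω
      simp only [mem_setOf_eq] at hω
      refine mem_iInter₂.2 fun m hm => subset_toMeasurable Q _ ?_
      simp only [mem_setOf_eq]
      exact le_trans hω (ENNReal.coe_le_coe.2 (by exact_mod_cast hm))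
    have hTsub : ∀ n : ℕ, T n ⊆ toMeasurable Q {ω | g ω ≤ ((n : ℝ≥0) : ℝ≥0∞)} :=
      fun n ω hω => mem_iInter₂.1 hω n le_rfl
    have hrestrict : ∀ n : ℕ,
        Q.restrict {ω | g ω ≤ ((n : ℝ≥0) : ℝ≥0∞)} = Q.restrict (T n) := by
      intro n
      refine le_antisymm (Measure.restrict_mono (hsubT n) le_rfl) ?_
      calc Q.restrict (T n)
          ≤ Q.restrict (toMeasurable Q {ω | g ω ≤ ((n : ℝ≥0) : ℝ≥0∞)}) :=
            Measure.restrict_mono (hTsub n) le_rfl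
        _ = Q.restrict {ω | g ω ≤ ((n : ℝ≥0) : ℝ≥0∞)} :=
            Measure.restrict_toMeasurable_of_sFinite _
    have hUnion : Q.restrict (⋃ n, T n) = Q := by
      have hcompl : Q (⋃ n, T n)ᶜ = 0 := by
        refine measure_mono_null ?_ hg
        intro ω hω
        simp only [mem_compl_iff, mem_iUnion, not_exists] at hω
        by_contra hne
        obtain ⟨k, hk⟩ := ENNReal.exists_nat_gt (show g ω ≠ ∞ from hne)
        refine hω k (mem_iInter₂.2 fun m hm => subset_toMeasurable Q _ ?_)
        refine le_trans hk.le ?_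
        simp only [ENNReal.coe_natCast]
        exact_mod_cast hm
      have : (⋃ n, T n) =ᵐ[Q] (univ : Set Ω) :=
        Filter.eventuallyEq_univ.2 (mem_ae_iff.2 hcompl)
      rw [Measure.restrict_congr_set this, Measure.restrict_univ]
    have hkey : ∫⁻ ω, h ω ∂Q = ⨆ n : ℕ, φ ((n : ℝ≥0)) := by
      have hind : ∀ ω, (⋃ n, T n).indicator h ω = ⨆ n, (T n).indicator h ω := by
        intro ω
        by_cases hω : ω ∈ ⋃ n, T n
        · obtain ⟨n, hn⟩ := mem_iUnion.1 hω
          rw [Set.indicator_of_mem hω]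
          refine le_antisymm (le_iSup_of_le n ?_) (iSup_le fun m => Set.indicator_le_self' (f := h) (s := T m) (fun x _ => zero_le) ω)
          · rw [Set.indicator_of_mem hn]
        · rw [Set.indicator_of_notMem hω]
          symm
          simp only [ENNReal.iSup_eq_zero]
          intro n
          rw [Set.indicator_of_notMem fun hn => hω (mem_iUnion.2 ⟨n, hn⟩)]
      calc ∫⁻ ω, h ω ∂Q = ∫⁻ ω, h ω ∂(Q.restrict (⋃ n, T n)) := by rw [hUnion]
        _ = ∫⁻ ω, (⋃ n, T n).indicator h ω ∂Q :=
            (lintegral_indicator (MeasurableSet.iUnion hTmeas) h).symm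
        _ = ∫⁻ ω, ⨆ n, (T n).indicator h ω ∂Q := by
            exact lintegral_congr hind
        _ = ⨆ n, ∫⁻ ω, (T n).indicator h ω ∂Q :=
            lintegral_iSup (fun n => hh.indicator (hTmeas n))
              (fun a b hab ω => Set.indicator_le_indicator_of_subset (hTmono hab)
                (fun _ => zero_le) ω)
        _ = ⨆ n : ℕ, φ ((n : ℝ≥0)) := by
            refine iSup_congr fun n => ?_
            rw [lintegral_indicator (hTmeas n)]
            show ∫⁻ ω in T n, h ω ∂Q = φ ((n : ℝ≥0))
            rw [hφ]
            simp only [hrestrict n]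
    rw [hkey]
    exact iSup_le fun n => le_iSup φ ((n : ℝ≥0))
  have h1 := tendsto_atTop_iSup hmono
  rwa [hsup] at h1


lemma aux_key {m0 : MeasurableSpace Ω} (ℱ : Filtration ℝ≥0 m0) (P Q : Measure Ω)
    (X : ℝ≥0 → Ω → ℝ)
    (hQassoc : ∀ t : ℝ≥0, ∀ Λ : Set Ω, MeasurableSet[ℱ t] Λ →
      Q (Λ ∩ {ω | lastZero X ω ≤ (t : ℝ≥0∞)}) = ENNReal.ofReal (∫ ω in Λ, X t ω ∂P))
    (hXmeas : ∀ t : ℝ≥0, StronglyMeasurable[ℱ t] (X t)) (hXint : ∀ t : ℝ≥0, Integrable (X t) P)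
    (hXnonneg : ∀ t ω, 0 ≤ X t ω)
    (F : ℝ≥0 → Ω → ℝ) (hFmeas : ∀ t : ℝ≥0, StronglyMeasurable[ℱ t] (F t))
    (hFnonneg : ∀ t ω, 0 ≤ F t ω) (hFXint : ∀ t : ℝ≥0, Integrable (fun ω => F t ω * X t ω) P)
    (t : ℝ≥0) (Λ : Set Ω) (hΛ : MeasurableSet[ℱ t] Λ) :
    ∫⁻ ω, Λ.indicator (fun ω => ENNReal.ofReal (F t ω)) ω
        ∂(Q.restrict {ω | lastZero X ω ≤ (t : ℝ≥0∞)}) =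
      ENNReal.ofReal (∫ ω in Λ, F t ω * X t ω ∂P) := by
  have hXm0 : Measurable fun ω => ENNReal.ofReal (X t ω) :=
    ((hXmeas t).mono (ℱ.le t)).measurable.ennreal_ofReal
  set μ2 := P.withDensity fun ω => ENNReal.ofReal (X t ω) with hμ2
  have htrim : (Q.restrict {ω | lastZero X ω ≤ (t : ℝ≥0∞)}).trim (ℱ.le t)
      = μ2.trim (ℱ.le t) := by
    refine @Measure.ext _ (ℱ t) _ _ fun s hs => ?_
    rw [trim_measurableSet_eq (ℱ.le t) hs, trim_measurableSet_eq (ℱ.le t) hs,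
      Measure.restrict_apply (ℱ.le t _ hs), hQassoc t s hs, hμ2,
      withDensity_apply _ (ℱ.le t _ hs),
      ofReal_integral_eq_lintegral_ofReal ((hXint t).integrableOn)
        (ae_of_all _ fun ω => hXnonneg t ω)]
  have hfm : Measurable[ℱ t] fun ω => Λ.indicator (fun ω => ENNReal.ofReal (F t ω)) ω :=
    ((hFmeas t).measurable.ennreal_ofReal).indicator hΛ
  calc ∫⁻ ω, Λ.indicator (fun ω => ENNReal.ofReal (F t ω)) ω
        ∂(Q.restrict {ω | lastZero X ω ≤ (t : ℝ≥0∞)})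
      = ∫⁻ ω, Λ.indicator (fun ω => ENNReal.ofReal (F t ω)) ω
          ∂((Q.restrict {ω | lastZero X ω ≤ (t : ℝ≥0∞)}).trim (ℱ.le t)) :=
        (lintegral_trim (ℱ.le t) hfm).symm
    _ = ∫⁻ ω, Λ.indicator (fun ω => ENNReal.ofReal (F t ω)) ω ∂(μ2.trim (ℱ.le t)) := by
        rw [htrim]
    _ = ∫⁻ ω, Λ.indicator (fun ω => ENNReal.ofReal (F t ω)) ω ∂μ2 :=
        lintegral_trim (ℱ.le t) hfm
    _ = ∫⁻ ω, ((fun ω => ENNReal.ofReal (X t ω)) *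
          fun ω => Λ.indicator (fun ω => ENNReal.ofReal (F t ω)) ω) ω ∂P :=
        lintegral_withDensity_eq_lintegral_mul P hXm0 (hfm.mono (ℱ.le t) le_rfl)
    _ = ∫⁻ ω in Λ, ENNReal.ofReal (F t ω * X t ω) ∂P := by
        rw [← lintegral_indicator (ℱ.le t _ hΛ)]
        refine lintegral_congr fun ω => ?_
        by_cases hω : ω ∈ Λ
        · simp only [Pi.mul_apply, Set.indicator_of_mem hω]
          rw [mul_comm (F t ω), ENNReal.ofReal_mul (hXnonneg t ω)]
        · simp [Set.indicator_of_notMem hω]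
    _ = ENNReal.ofReal (∫ ω in Λ, F t ω * X t ω ∂P) :=
        (ofReal_integral_eq_lintegral_ofReal ((hFXint t).integrableOn)
          (ae_of_all _ fun ω => mul_nonneg (hFnonneg t ω) (hXnonneg t ω))).symm

/-- Universal penalisation theorem for class (C) weights: the penalised measures
`Q_t = (F_t X_t / E_P[F_t X_t])·P` converge, on each `F_s`, to
`Q_∞ = (F_∞ / Q[F_∞])·Q`. -/
theorem penalisation_classC
    {m0 : MeasurableSpace Ω} (ℱ : Filtration ℝ≥0 m0) (P : Measure Ω)
    [IsProbabilityMeasure P]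
    (hnat : NaturalConditions ℱ P)
    (hgen : (⨆ t : ℝ≥0, (ℱ t : MeasurableSpace Ω)) = m0)
    (X N A : ℝ≥0 → Ω → ℝ) (hX : ClassSigma ℱ P X N A)
    (Q : Measure Ω) (hQ : AssociatedMeasure ℱ P Q X)
    (hAinf : ∀ᵐ ω ∂P, Tendsto (fun t => A t ω) atTop atTop)
    (hexp : ExpIdentity ℱ P Q X A)
    (F : ℝ≥0 → Ω → ℝ) (Finf : Ω → ℝ) (hC : ClassC ℱ Q X F Finf)
    (hFg : Integrable (valueAtLastZero X F Finf) Q)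
    (hFinf_ne : ¬ (Finf =ᵐ[Q] fun _ => (0 : ℝ))) :
    (∃ T : ℝ≥0, ∀ t : ℝ≥0, T ≤ t →
      Integrable (fun ω => F t ω * X t ω) P ∧ 0 < ∫ ω, F t ω * X t ω ∂P) ∧
    0 < ∫ ω, Finf ω ∂Q ∧
    (∀ s : ℝ≥0, ∀ Λ : Set Ω, MeasurableSet[ℱ s] Λ →
      Tendsto
        (fun t : ℝ≥0 => (∫ ω in Λ, F t ω * X t ω ∂P) / ∫ ω, F t ω * X t ω ∂P)
        atTop
        (nhds ((∫ ω in Λ, Finf ω ∂Q) / ∫ ω, Finf ω ∂Q))) := by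
  obtain ⟨hQsf, hQnull, hQassoc⟩ := hQ
  haveI := hQsf
  obtain ⟨C, hCbd⟩ := hC.bdd
  have hXint : ∀ t : ℝ≥0, Integrable (X t) P := fun t => hX.subm.integrable t
  have hFXint : ∀ t : ℝ≥0, Integrable (fun ω => F t ω * X t ω) P := by
    intro t
    have hm : AEStronglyMeasurable (fun ω => F t ω * X t ω) P :=
      (((hC.adapted t).stronglyMeasurable.mono (ℱ.le t)).mul ((hX.subm.1 t).mono (ℱ.le t))).aestronglyMeasurable
    refine Integrable.mono ((hXint t).const_mul C) hm (ae_of_all _ fun ω => ?_)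
    have h1 : 0 ≤ F t ω * X t ω := mul_nonneg (hC.nonneg t ω) (hX.nonneg t ω)
    have h2 : F t ω * X t ω ≤ C * X t ω :=
      mul_le_mul_of_nonneg_right (hCbd t ω) (hX.nonneg t ω)
    rw [Real.norm_of_nonneg h1, Real.norm_of_nonneg (h1.trans h2)]
    exact h2
  have hFinf_nonneg : ∀ ω, 0 ≤ Finf ω := fun ω =>
    ge_of_tendsto' (hC.tendsto ω) fun u => hC.nonneg u ω
  have hFinf_le : ∀ (t : ℝ≥0) ω, Finf ω ≤ F t ω := fun t ω =>
    le_of_tendsto (hC.tendsto ω) (Filter.eventually_atTop.2 ⟨t, fun u hu => hC.anti ω hu⟩)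
  have hFinf_meas : StronglyMeasurable Finf := by
    refine stronglyMeasurable_of_tendsto (atTop : Filter ℕ) (f := fun n : ℕ => F (n : ℝ≥0))
      (fun n => (hC.adapted (n : ℝ≥0)).stronglyMeasurable.mono (ℱ.le _)) ?_
    rw [tendsto_pi_nhds]
    intro ω
    exact (hC.tendsto ω).comp (tendsto_natCast_atTop_atTop)
  have hD_pos : 0 < ∫ ω, Finf ω ∂Q := by
    rcases (integral_nonneg (show 0 ≤ Finf from hFinf_nonneg)).lt_or_eq with h | h
    · exact h
    · exact absurd ((integral_eq_zero_iff_of_nonneg hFinf_nonneg hC.integrable).1 h.symm)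
        hFinf_ne
  -- the a.e.-measurable version of F_g
  have hGmeas := hFg.aestronglyMeasurable
  set G' : Ω → ℝ := hGmeas.mk _ with hG'def
  have hG'meas : StronglyMeasurable G' := hGmeas.stronglyMeasurable_mk
  have hGG' : valueAtLastZero X F Finf =ᵐ[Q] G' := hGmeas.ae_eq_mk
  have hG'null : Q {ω | ¬ valueAtLastZero X F Finf ω = G' ω} = 0 := ae_iff.1 hGG'
  have hG_nonneg : ∀ ω, 0 ≤ valueAtLastZero X F Finf ω := by
    intro ω
    unfold valueAtLastZero
    split_ifs
    · exact hFinf_nonneg ω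
    · exact hC.nonneg _ ω
  have hFt_le_G : ∀ (t : ℝ≥0) ω, lastZero X ω ≤ (t : ℝ≥0∞) →
      F t ω ≤ valueAtLastZero X F Finf ω := by
    intro t ω hω
    have hne : lastZero X ω ≠ ∞ := ne_top_of_le_ne_top ENNReal.coe_ne_top hω
    have htn : (lastZero X ω).toNNReal ≤ t := by
      rw [← ENNReal.coe_le_coe, ENNReal.coe_toNNReal hne]
      exact hω
    rw [valueAtLastZero, if_neg hne]
    exact hC.anti ω htn
  have hFinf_le_G : ∀ ω, Finf ω ≤ valueAtLastZero X F Finf ω := by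
    intro ω
    unfold valueAtLastZero
    split_ifs
    · exact le_rfl
    · exact hFinf_le _ ω
  have hG'fin : ∫⁻ ω, ENNReal.ofReal (G' ω) ∂Q ≠ ∞ := by
    have heq : ∫⁻ ω, ENNReal.ofReal (G' ω) ∂Q
        = ∫⁻ ω, ENNReal.ofReal (valueAtLastZero X F Finf ω) ∂Q :=
      lintegral_congr_ae (hGG'.symm.mono fun ω h => by simp only [h])
    rw [heq, ← ofReal_integral_eq_lintegral_ofReal hFg (ae_of_all _ hG_nonneg)]
    exact ENNReal.ofReal_ne_top
  -- F t is dominated by G' almost everywhere for the restricted measure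
  have hFt_le_G' : ∀ t : ℝ≥0, ∀ᵐ ω ∂(Q.restrict {ω | lastZero X ω ≤ (t : ℝ≥0∞)}),
      ENNReal.ofReal (F t ω) ≤ ENNReal.ofReal (G' ω) := by
    intro t
    rw [ae_iff]
    have hset : MeasurableSet {ω | ¬ ENNReal.ofReal (F t ω) ≤ ENNReal.ofReal (G' ω)} := by
      simp only [not_le]
      exact measurableSet_lt hG'meas.measurable.ennreal_ofReal
        ((hC.adapted t).stronglyMeasurable.mono (ℱ.le t)).measurable.ennreal_ofReal
    rw [Measure.restrict_apply hset]
    refine measure_mono_null ?_ hG'null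
    rintro ω ⟨hω1, hω2⟩
    simp only [mem_setOf_eq] at hω1 hω2 ⊢
    intro heq
    exact hω1 (ENNReal.ofReal_le_ofReal (heq ▸ hFt_le_G t ω hω2))
  -- the central convergence statement
  have key : ∀ (s : ℝ≥0) (Λ : Set Ω), MeasurableSet[ℱ s] Λ →
      Tendsto (fun t : ℝ≥0 => ∫ ω in Λ, F t ω * X t ω ∂P) atTop
        (𝓝 (∫ ω in Λ, Finf ω ∂Q)) := by
    intro s Λ hΛ
    have hΛ0 : MeasurableSet Λ := ℱ.le s _ hΛ
    set ν : ℝ≥0 → Measure Ω := fun t => Q.restrict {ω | lastZero X ω ≤ (t : ℝ≥0∞)} with hν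
    set I : ℝ≥0 → ℝ≥0∞ :=
      fun t => ∫⁻ ω, Λ.indicator (fun ω => ENNReal.ofReal (F t ω)) ω ∂(ν t) with hI
    set L : ℝ≥0∞ := ∫⁻ ω, Λ.indicator (fun ω => ENNReal.ofReal (Finf ω)) ω ∂Q with hL
    have hlim_inf : Tendsto
        (fun t => ∫⁻ ω, Λ.indicator (fun ω => ENNReal.ofReal (Finf ω)) ω ∂(ν t)) atTop
        (𝓝 L) :=
      aux_tendsto Q (lastZero X) hQnull _
        ((hFinf_meas.measurable.ennreal_ofReal).indicator hΛ0)
    have hliminf : L ≤ liminf I atTop := by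
      rw [← hlim_inf.liminf_eq]
      refine liminf_le_liminf (Eventually.of_forall fun t => ?_)
      exact lintegral_mono fun ω =>
        Set.indicator_le_indicator (ENNReal.ofReal_le_ofReal (hFinf_le t ω))
    have hlimsup : limsup I atTop ≤ L := by
      set B : ℕ → ℝ≥0∞ := fun n => ∫⁻ ω,
        Λ.indicator (fun ω => ENNReal.ofReal (F (n : ℝ≥0) ω) ⊓ ENNReal.ofReal (G' ω)) ω ∂Q
        with hB
      have hBn : ∀ n : ℕ, limsup I atTop ≤ B n := by
        intro n
        refine limsup_le_of_le (by isBoundedDefault) ?_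
        filter_upwards [eventually_ge_atTop ((n : ℝ≥0))] with t ht
        have step1 : I t ≤ ∫⁻ ω,
            Λ.indicator (fun ω => ENNReal.ofReal (F (n : ℝ≥0) ω) ⊓ ENNReal.ofReal (G' ω)) ω
            ∂(ν t) := by
          refine lintegral_mono_ae ?_
          filter_upwards [hFt_le_G' t] with ω hω
          exact Set.indicator_le_indicator
            (le_inf (ENNReal.ofReal_le_ofReal (hC.anti ω ht)) hω)
        exact step1.trans (lintegral_mono' Measure.restrict_le_self le_rfl)
      have hmeasn : ∀ n : ℕ, Measurable fun ω =>
          Λ.indicator (fun ω => ENNReal.ofReal (F (n : ℝ≥0) ω) ⊓ ENNReal.ofReal (G' ω)) ω :=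
        fun n => (Measurable.inf ((hC.adapted _).stronglyMeasurable.mono (ℱ.le _)).measurable.ennreal_ofReal
          hG'meas.measurable.ennreal_ofReal).indicator hΛ0
      have hanti : Antitone fun n : ℕ => fun ω =>
          Λ.indicator (fun ω => ENNReal.ofReal (F (n : ℝ≥0) ω) ⊓ ENNReal.ofReal (G' ω)) ω := by
        intro a b hab ω
        refine Set.indicator_le_indicator (inf_le_inf ?_ le_rfl)
        exact ENNReal.ofReal_le_ofReal (hC.anti ω (by exact_mod_cast hab))
      have hfin : ∫⁻ ω,
          Λ.indicator (fun ω => ENNReal.ofReal (F ((0 : ℕ) : ℝ≥0) ω) ⊓ ENNReal.ofReal (G' ω)) ω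
          ∂Q ≠ ∞ := by
        refine ne_top_of_le_ne_top hG'fin (lintegral_mono fun ω => ?_)
        exact le_trans (Set.indicator_le_self'
          (fun x _ => zero_le) ω) inf_le_right
      have hiInf : (⨅ n : ℕ, B n) = ∫⁻ ω,
          Λ.indicator (fun ω => ENNReal.ofReal (Finf ω) ⊓ ENNReal.ofReal (G' ω)) ω ∂Q := by
        rw [hB, ← lintegral_iInf hmeasn hanti hfin]
        refine lintegral_congr fun ω => ?_
        by_cases hmem : ω ∈ Λ
        · simp only [Set.indicator_of_mem hmem]
          have h2 : (⨅ n : ℕ, ENNReal.ofReal (F ((n : ℕ) : ℝ≥0) ω)) = ENNReal.ofReal (Finf ω) := by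
            have h1 : Tendsto (fun n : ℕ => ENNReal.ofReal (F ((n : ℕ) : ℝ≥0) ω)) atTop
                (𝓝 (ENNReal.ofReal (Finf ω))) :=
              (ENNReal.continuous_ofReal.tendsto _).comp
                ((hC.tendsto ω).comp tendsto_natCast_atTop_atTop)
            have hanti2 : Antitone fun n : ℕ => ENNReal.ofReal (F ((n : ℕ) : ℝ≥0) ω) :=
              fun a b hab => ENNReal.ofReal_le_ofReal (hC.anti ω (by exact_mod_cast hab))
            exact tendsto_nhds_unique (tendsto_atTop_iInf hanti2) h1
          rw [← h2]
          refine le_antisymm (le_inf (le_iInf fun n => (iInf_le _ n).trans inf_le_left)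
            ((iInf_le _ 0).trans inf_le_right)) (le_iInf fun n => inf_le_inf (iInf_le _ n) le_rfl)
        · simp [Set.indicator_of_notMem hmem]
      have hLeq : ∫⁻ ω,
          Λ.indicator (fun ω => ENNReal.ofReal (Finf ω) ⊓ ENNReal.ofReal (G' ω)) ω ∂Q = L := by
        rw [hL]
        refine lintegral_congr_ae ?_
        filter_upwards [hGG'] with ω hω
        by_cases hmem : ω ∈ Λ
        · simp only [Set.indicator_of_mem hmem]
          rw [inf_eq_left.2 (ENNReal.ofReal_le_ofReal (hω ▸ hFinf_le_G ω))]
        · simp [Set.indicator_of_notMem hmem]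
      exact le_trans (le_iInf hBn) (le_of_eq (hiInf.trans hLeq))
    have hItendsto : Tendsto I atTop (𝓝 L) :=
      tendsto_of_le_liminf_of_limsup_le hliminf hlimsup
    have heq : ∀ᶠ t : ℝ≥0 in atTop,
        I t = ENNReal.ofReal (∫ ω in Λ, F t ω * X t ω ∂P) := by
      filter_upwards [eventually_ge_atTop s] with t ht
      exact aux_key ℱ P Q X hQassoc (fun u => hX.subm.1 u) hXint hX.nonneg F (fun u => (hC.adapted u).stronglyMeasurable)
        hC.nonneg hFXint t Λ (ℱ.mono ht _ hΛ)
    have h2 : Tendsto (fun t => ENNReal.ofReal (∫ ω in Λ, F t ω * X t ω ∂P)) atTop (𝓝 L) :=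
      hItendsto.congr' heq
    have hL_eq : L = ENNReal.ofReal (∫ ω in Λ, Finf ω ∂Q) := by
      rw [hL, lintegral_indicator hΛ0,
        ← ofReal_integral_eq_lintegral_ofReal hC.integrable.integrableOn
          (ae_of_all _ hFinf_nonneg)]
    rw [hL_eq] at h2
    have h3 := (ENNReal.tendsto_toReal (ENNReal.ofReal_ne_top)).comp h2
    have h4 : (fun t : ℝ≥0 => (ENNReal.ofReal (∫ ω in Λ, F t ω * X t ω ∂P)).toReal)
        = fun t : ℝ≥0 => ∫ ω in Λ, F t ω * X t ω ∂P := by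
      funext t
      exact ENNReal.toReal_ofReal
        (integral_nonneg fun ω => mul_nonneg (hC.nonneg t ω) (hX.nonneg t ω))
    rw [Function.comp_def, h4] at h3
    rwa [ENNReal.toReal_ofReal (integral_nonneg hFinf_nonneg)] at h3
  have hden : Tendsto (fun t : ℝ≥0 => ∫ ω, F t ω * X t ω ∂P) atTop
      (𝓝 (∫ ω, Finf ω ∂Q)) := by
    have := key 0 univ MeasurableSet.univ
    simpa only [setIntegral_univ] using this
  refine ⟨?_, hD_pos, ?_⟩
  · have hev : ∀ᶠ t : ℝ≥0 in atTop, 0 < ∫ ω, F t ω * X t ω ∂P :=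
      hden.eventually (eventually_gt_nhds hD_pos)
    obtain ⟨T, hT⟩ := eventually_atTop.mp hev
    exact ⟨T, fun t ht => ⟨hFXint t, hT t ht⟩⟩
  · intro s Λ hΛ
    exact (key s Λ hΛ).div hden hD_pos.ne'
end
end
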